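/- arXiv:2010.05053 — 6 statements merged into one kernel-verified Lean document; each statement's English description precedes it below -/
import Mathlib

section
/- Let F, G, R be three pairwise distinct k-faces of a d-polytope Q with 1 ≤ k ≤ d−1. Then there exists an affine hyperplane H that intersects both F and G, is disjoint from R, and contains no vertex of Q. -/
open Set Classical

/-- Points of `ℝ^N`. -/
abbrev Pt (N : ℕ) := EuclideanSpace ℝ (Fin N)

/-- A polytope: the convex hull of a finite set of points. -/
def IsPolytope {N : ℕ} (Q : Set (Pt N)) : Prop :=
  ∃ S : Set (Pt N), S.Finite ∧ Q = convexHull ℝ S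

/-- Dimension of a subset of `ℝ^N`: the dimension of its affine span,
with the empty set having dimension `-1`. -/
noncomputable def faceDim {N : ℕ} (s : Set (Pt N)) : ℤ :=
  if s = ∅ then -1 else (Module.finrank ℝ (affineSpan ℝ s).direction : ℤ)

/-- A face of a polytope: an exposed subset (this includes `∅` and the polytope itself). -/
def IsFaceOf {N : ℕ} (Q F : Set (Pt N)) : Prop :=
  IsExposed ℝ Q F

/-- A `k`-face: a face of dimension `k`. -/
def IsKFaceOf {N : ℕ} (k : ℕ) (Q F : Set (Pt N)) : Prop :=
  IsFaceOf Q F ∧ faceDim F = k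

/-- A vertex: a point spanning a `0`-dimensional face. -/
def IsVertexOf {N : ℕ} (Q : Set (Pt N)) (v : Pt N) : Prop :=
  IsKFaceOf 0 Q {v}

/-- An affine hyperplane: the zero set of a nonconstant affine functional. -/
def IsHyperplane {N : ℕ} (H : Set (Pt N)) : Prop :=
  ∃ f : Pt N →ᵃ[ℝ] ℝ, f.linear ≠ 0 ∧ H = {x | f x = 0}

lemma relint_ball {N : ℕ} {F : Set (Pt N)} {p : Pt N} (hp : p ∈ intrinsicInterior ℝ F) :
    p ∈ F ∧ ∃ ε > (0:ℝ), ∀ z ∈ affineSpan ℝ F, dist z p < ε → z ∈ F := by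
  refine ⟨intrinsicInterior_subset hp, ?_⟩
  obtain ⟨p', hp', hcoe⟩ := mem_intrinsicInterior.mp hp
  obtain ⟨ε, hε, hball⟩ := Metric.mem_nhds_iff.mp (mem_interior_iff_mem_nhds.mp hp')
  refine ⟨ε, hε, fun z hz hdist => ?_⟩
  have : (⟨z, hz⟩ : affineSpan ℝ F) ∈ Metric.ball p' ε := by
    simp only [Metric.mem_ball, Subtype.dist_eq, hcoe]
    exact hdist
  exact hball this

lemma relint_shift {N : ℕ} {F : Set (Pt N)} {p x : Pt N} (hp : p ∈ intrinsicInterior ℝ F)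
    (hx : x ∈ affineSpan ℝ F) : ∃ δ : ℝ, 0 < δ ∧ δ • (p - x) + p ∈ F := by
  obtain ⟨hpF, ε, hε, hball⟩ := relint_ball hp
  have hpspan : p ∈ affineSpan ℝ F := mem_affineSpan ℝ hpF
  set δ : ℝ := ε / (2 * (‖p - x‖ + 1)) with hδdef
  have hpos : 0 < δ := by positivity
  refine ⟨δ, hpos, ?_⟩
  have hzspan : δ • (p - x) + p ∈ affineSpan ℝ F := by
    have := AffineSubspace.smul_vsub_vadd_mem (affineSpan ℝ F) δ hpspan hx hpspan
    simpa using this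
  refine hball _ hzspan ?_
  have : dist (δ • (p - x) + p) p = δ * ‖p - x‖ := by
    simp [dist_eq_norm, norm_smul, abs_of_pos hpos]
  rw [this]
  have h1 : δ * ‖p - x‖ < δ * (2 * (‖p - x‖ + 1)) := by
    nlinarith [norm_nonneg (p - x)]
  have h2 : δ * (2 * (‖p - x‖ + 1)) = ε := by
    rw [hδdef, div_mul_cancel₀]
    positivity
  linarith

lemma key_extreme {N : ℕ} {Q E F : Set (Pt N)} {p x : Pt N} (hE : IsExtreme ℝ Q E)
    (hFQ : F ⊆ Q) (hp : p ∈ intrinsicInterior ℝ F) (hpE : p ∈ E)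
    (hxQ : x ∈ Q) (hxs : x ∈ affineSpan ℝ F) : x ∈ E := by
  by_cases hxp : x = p
  · subst hxp; exact hpE
  obtain ⟨δ, hδ, hz⟩ := relint_shift hp hxs
  set z := δ • (p - x) + p with hzdef
  have hzQ : z ∈ Q := hFQ hz
  have hmem : p ∈ openSegment ℝ x z := by
    refine ⟨δ / (1 + δ), 1 / (1 + δ), by positivity, by positivity, ?_, ?_⟩
    · field_simp; ring
    · rw [hzdef]
      match_scalars <;> (field_simp; try ring)
  exact hE.2 hxQ hzQ hpE hmem




lemma kface_nonempty {N k : ℕ} {Q F : Set (Pt N)} (h : IsKFaceOf k Q F) : F.Nonempty := by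
  rw [Set.nonempty_iff_ne_empty]
  intro he
  have := h.2
  rw [faceDim, if_pos he] at this
  omega

lemma kface_finrank {N k : ℕ} {Q F : Set (Pt N)} (h : IsKFaceOf k Q F) :
    Module.finrank ℝ (affineSpan ℝ F).direction = k := by
  have hne := kface_nonempty h
  have := h.2
  rw [faceDim, if_neg (Set.nonempty_iff_ne_empty.mp hne)] at this
  exact_mod_cast this

lemma span_eq_of_subset {N k : ℕ} {Q F E : Set (Pt N)}
    (hF : IsKFaceOf k Q F) (hE : IsKFaceOf k Q E) (hsub : F ⊆ E) :
    affineSpan ℝ F = affineSpan ℝ E := by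
  have hle : affineSpan ℝ F ≤ affineSpan ℝ E := affineSpan_mono ℝ hsub
  have hdle : (affineSpan ℝ F).direction ≤ (affineSpan ℝ E).direction :=
    AffineSubspace.direction_le hle
  have hdeq : (affineSpan ℝ F).direction = (affineSpan ℝ E).direction :=
    Submodule.eq_of_le_of_finrank_eq hdle (by rw [kface_finrank hF, kface_finrank hE])
  obtain ⟨p, hp⟩ := kface_nonempty hF
  exact AffineSubspace.ext_of_direction_eq hdeq
    ⟨p, mem_affineSpan ℝ hp, mem_affineSpan ℝ (hsub hp)⟩

/-- Distinct k-faces: relative interior of one misses the other. -/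
lemma relint_not_mem_other {N k : ℕ} {Q F E : Set (Pt N)}
    (hF : IsKFaceOf k Q F) (hE : IsKFaceOf k Q E) (hne : F ≠ E)
    {p : Pt N} (hp : p ∈ intrinsicInterior ℝ F) : p ∉ E := by
  intro hpE
  have hFQ : F ⊆ Q := hF.1.subset
  have hEQ : E ⊆ Q := hE.1.subset
  have hEext : IsExtreme ℝ Q E := hE.1.isExtreme
  have hFext : IsExtreme ℝ Q F := hF.1.isExtreme
  have hsub : F ⊆ E := fun x hx =>
    key_extreme hEext hFQ hp hpE (hFQ hx) (mem_affineSpan ℝ hx)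
  have hspan := span_eq_of_subset hF hE hsub
  have hsub2 : E ⊆ F := fun y hy =>
    key_extreme hFext hFQ hp (intrinsicInterior_subset hp) (hEQ hy)
      (hspan ▸ mem_affineSpan ℝ hy)
  exact hne (Set.Subset.antisymm hsub hsub2)

open scoped RealInnerProductSpace

/-- An affine functional vanishing on the line through `p ≠ q` and nonzero at `x ∉ line`. -/
lemma exists_affine_vanishing_line {N : ℕ} {p q x : Pt N} (hpq : p ≠ q)
    (hx : x ∉ affineSpan ℝ ({p, q} : Set (Pt N))) :
    ∃ f : Pt N →ᵃ[ℝ] ℝ, f p = 0 ∧ f q = 0 ∧ 0 < f x := by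
  set e : Pt N := q - p with he
  have hee : ⟪e, e⟫ ≠ 0 := by
    rw [ne_eq, inner_self_eq_zero]
    intro h0
    exact hpq (by rwa [he, sub_eq_zero, eq_comm] at h0)
  set c : ℝ := ⟪e, x - p⟫ / ⟪e, e⟫ with hc
  set u : Pt N := (x - p) - c • e with hu
  have hue : ⟪u, e⟫ = 0 := by
    rw [hu, inner_sub_left, real_inner_smul_left, real_inner_comm e (x - p)]
    rw [hc, div_mul_cancel₀ _ hee, sub_self]
  have hun : u ≠ 0 := by
    intro h0
    apply hx
    have hxe : x = c • (q -ᵥ p) +ᵥ p := by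
      have : x - p = c • e := by rw [← sub_eq_zero]; rw [hu] at h0; linear_combination (norm := module) h0
      simp only [vsub_eq_sub, vadd_eq_add, ← he, ← this]
      abel
    rw [hxe]
    exact smul_vsub_vadd_mem_affineSpan_pair c p q
  set f : Pt N →ᵃ[ℝ] ℝ :=
    (innerSL ℝ u).toLinearMap.toAffineMap - AffineMap.const ℝ (Pt N) ⟪u, p⟫ with hf
  have happ : ∀ z : Pt N, f z = ⟪u, z⟫ - ⟪u, p⟫ := by
    intro z
    rw [hf]
    simp [AffineMap.coe_sub]
  refine ⟨f, ?_, ?_, ?_⟩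
  · rw [happ]; ring
  · have : ⟪u, q⟫ - ⟪u, p⟫ = ⟪u, e⟫ := by rw [he, inner_sub_right]
    rw [happ, this, hue]
  · have hval : ⟪u, x⟫ - ⟪u, p⟫ = ⟪u, u⟫ + c * ⟪u, e⟫ := by
      rw [← inner_sub_right]
      have : x - p = u + c • e := by rw [hu]; abel
      rw [this, inner_add_right, real_inner_smul_right]
    rw [happ, hval, hue, mul_zero, add_zero]
    have := real_inner_self_nonneg (x := u)
    rcases this.lt_or_eq with h | h
    · exact h
    · exact absurd ((inner_self_eq_zero (𝕜 := ℝ)).mp h.symm) hun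

lemma perturb {N : ℕ} {R : Set (Pt N)} (hRc : IsCompact R) (hRne : R.Nonempty)
    {p q x w : Pt N} (hpq : p ≠ q) (hx : x ∉ affineSpan ℝ ({p, q} : Set (Pt N)))
    {h : Pt N →ᵃ[ℝ] ℝ} (hneg : ∀ z ∈ R, h z < 0) (hp : h p = 0) (hq : h q = 0) :
    ∃ h' : Pt N →ᵃ[ℝ] ℝ, (∀ z ∈ R, h' z < 0) ∧ h' p = 0 ∧ h' q = 0 ∧ h' x ≠ 0 ∧
      (h w ≠ 0 → h' w ≠ 0) := by
  by_cases hx0 : h x ≠ 0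
  · exact ⟨h, hneg, hp, hq, hx0, fun hw => hw⟩
  push_neg at hx0
  obtain ⟨f, hfp, hfq, hfx⟩ := exists_affine_vanishing_line hpq hx
  obtain ⟨z₀, hz₀R, hz₀max⟩ := hRc.exists_isMaxOn hRne (h.continuous_of_finiteDimensional.continuousOn)
  obtain ⟨z₁, hz₁R, hz₁max⟩ := hRc.exists_isMaxOn hRne
    ((f.continuous_of_finiteDimensional.abs).continuousOn)
  set C : ℝ := h z₀ with hC
  have hCneg : C < 0 := hneg z₀ hz₀R
  set M : ℝ := |f z₁| with hM
  have hM0 : 0 ≤ M := abs_nonneg _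
  set e₀ : ℝ := -C / (2 * (M + 1)) with he₀
  have he₀pos : 0 < e₀ := by rw [he₀]; exact div_pos (by linarith) (by positivity)
  set e₁ : ℝ := if h w = 0 then e₀ else |h w| / (2 * (|f w| + 1)) with he₁
  have he₁pos : 0 < e₁ := by
    rw [he₁]; split
    · exact he₀pos
    · next hw =>
        have : 0 < |h w| := abs_pos.mpr hw
        positivity
  set ε : ℝ := min e₀ e₁ with hε
  have hεpos : 0 < ε := lt_min he₀pos he₁pos
  have hadd : ∀ z : Pt N, (h + ε • f) z = h z + ε * f z := fun z => rfl
  refine ⟨h + ε • f, ?_, ?_, ?_, ?_, ?_⟩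
  · intro z hz
    have h1 : h z ≤ C := hz₀max hz
    have h2 : |f z| ≤ M := hz₁max hz
    have h3 : ε * f z ≤ ε * M := by
      have := (abs_le.mp h2).2
      nlinarith
    have h4 : ε * M ≤ e₀ * M := by nlinarith [min_le_left e₀ e₁]
    have h5 : e₀ * M < -C / 2 := by
      rw [he₀]
      rw [div_mul_eq_mul_div, div_lt_div_iff₀ (by positivity) (by norm_num)]
      nlinarith
    rw [hadd]
    nlinarith
  · rw [hadd, hp, hfp]; ring
  · rw [hadd, hq, hfq]; ring
  · rw [hadd, hx0, zero_add]
    positivity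
  · intro hw
    have hle : ε ≤ e₁ := min_le_right _ _
    rw [he₁, if_neg hw] at hle
    have habs : |ε * f w| < |h w| := by
      rw [abs_mul, abs_of_pos hεpos]
      calc ε * |f w| ≤ |h w| / (2 * (|f w| + 1)) * |f w| := by
            nlinarith [abs_nonneg (f w)]
        _ < |h w| := by
            rw [div_mul_eq_mul_div, div_lt_iff₀ (by positivity)]
            nlinarith [abs_pos.mpr hw, abs_nonneg (f w)]
    rw [hadd]
    intro hzero
    have : ε * f w = -h w := by linarith
    rw [this, abs_neg, lt_self_iff_false] at habs
    exact habs

set_option maxHeartbeats 1000000 in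
/-- Given three pairwise distinct `k`-faces `F, G, R` of a
`d`-polytope (`1 ≤ k ≤ d - 1`), there is a hyperplane meeting `F` and `G`,
disjoint from `R`, and containing no vertex of `Q`. -/
theorem exists_hyperplane_meeting_two_faces {N d k : ℕ} (Q F G R : Set (Pt N))
    (hQ : IsPolytope Q) (hd : faceDim Q = d) (hk1 : 1 ≤ k) (hkd : k + 1 ≤ d)
    (hF : IsKFaceOf k Q F) (hG : IsKFaceOf k Q G) (hR : IsKFaceOf k Q R)
    (hFG : F ≠ G) (hFR : F ≠ R) (hGR : G ≠ R) :
    ∃ H : Set (Pt N), IsHyperplane H ∧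
      (H ∩ F).Nonempty ∧ (H ∩ G).Nonempty ∧ H ∩ R = ∅ ∧
      ∀ v : Pt N, IsVertexOf Q v → v ∉ H := by
  classical
  obtain ⟨S, hSfin, hQeq⟩ := hQ
  have hQconv : Convex ℝ Q := hQeq ▸ convex_convexHull ℝ S
  have hQcomp : IsCompact Q := hQeq ▸ hSfin.isCompact_convexHull ℝ
  have hFexp : IsExposed ℝ Q F := hF.1
  have hGexp : IsExposed ℝ Q G := hG.1
  have hRexp : IsExposed ℝ Q R := hR.1
  have hFQ : F ⊆ Q := hFexp.subset
  have hGQ : G ⊆ Q := hGexp.subset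
  have hRQ : R ⊆ Q := hRexp.subset
  have hFconv : Convex ℝ F := hFexp.convex hQconv
  have hGconv : Convex ℝ G := hGexp.convex hQconv
  have hRconv : Convex ℝ R := hRexp.convex hQconv
  have hFext : IsExtreme ℝ Q F := hFexp.isExtreme
  have hGext : IsExtreme ℝ Q G := hGexp.isExtreme
  have hRext : IsExtreme ℝ Q R := hRexp.isExtreme
  have hRcomp : IsCompact R := hQcomp.of_isClosed_subset (hRexp.isClosed hQcomp.isClosed) hRQ
  have hRne : R.Nonempty := kface_nonempty hR
  -- relative interior points
  obtain ⟨p, hp⟩ := Set.Nonempty.intrinsicInterior hFconv (kface_nonempty hF)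
  obtain ⟨q, hq⟩ := Set.Nonempty.intrinsicInterior hGconv (kface_nonempty hG)
  have hpF : p ∈ F := intrinsicInterior_subset hp
  have hqG : q ∈ G := intrinsicInterior_subset hq
  have hpQ : p ∈ Q := hFQ hpF
  have hqQ : q ∈ Q := hGQ hqG
  have hpG : p ∉ G := relint_not_mem_other hF hG hFG hp
  have hpR : p ∉ R := relint_not_mem_other hF hR hFR hp
  have hqF : q ∉ F := relint_not_mem_other hG hF (Ne.symm hFG) hq
  have hqR : q ∉ R := relint_not_mem_other hG hR hGR hq
  have hpq : p ≠ q := fun h => hqF (h ▸ hpF)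
  set L : AffineSubspace ℝ (Pt N) := affineSpan ℝ ({p, q} : Set (Pt N)) with hL
  -- the line through p and q misses R
  have hLR : ∀ r ∈ R, r ∉ (L : Set (Pt N)) := by
    intro r hrR hrL
    have hdir : r -ᵥ p ∈ L.direction :=
      AffineSubspace.vsub_mem_direction hrL (left_mem_affineSpan_pair ℝ p q)
    rw [hL, direction_affineSpan, vectorSpan_pair] at hdir
    obtain ⟨a, ha⟩ := Submodule.mem_span_singleton.mp hdir
    have hreq : r = a • (p - q) + p := by
      have h' : a • (p - q) = r - p := by simpa using ha
      linear_combination (norm := module) -h'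
    have hrQ : r ∈ Q := hRQ hrR
    rcases lt_trichotomy a 0 with haneg | hazero | hapos
    · rcases lt_trichotomy a (-1) with ha1 | ha1 | ha1
      · -- q strictly between p and r
        have ha0 : a ≠ 0 := by linarith
        have h1a : 0 < 1 + a⁻¹ := by
          have heq : 1 + a⁻¹ = (a + 1) / a := by field_simp
          rw [heq]; exact div_pos_of_neg_of_neg (by linarith) (by linarith)
        have hinvneg : a⁻¹ < 0 := inv_lt_zero.mpr (by linarith)
        have hmem : q ∈ openSegment ℝ p r := by
          refine ⟨1 + a⁻¹, -a⁻¹, h1a, by linarith, by ring, ?_⟩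
          rw [hreq]
          match_scalars <;> field_simp <;> ring
        exact hpG (hGext.2 hpQ hrQ hqG hmem)
      · -- r = q
        have : r = q := by rw [hreq, ha1]; module
        exact hqR (this ▸ hrR)
      · -- r strictly between p and q
        have hmem : r ∈ openSegment ℝ p q := by
          refine ⟨1 + a, -a, by linarith, by linarith, by ring, ?_⟩
          rw [hreq]; module
        exact hpR (hRext.2 hpQ hqQ hrR hmem)
    · refine hpR ?_
      have hrp : r = p := by rw [hreq, hazero]; module
      exact hrp ▸ hrR
    · -- p strictly between q and r
      have h1a : (0:ℝ) < 1 + a := by linarith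
      have h1a' : (1:ℝ) + a ≠ 0 := by linarith
      have hmem : p ∈ openSegment ℝ q r := by
        refine ⟨a/(1+a), 1/(1+a), div_pos hapos h1a, by positivity, ?_, ?_⟩
        · field_simp
          try ring
        · rw [hreq]
          match_scalars <;> field_simp <;> ring
      exact hqF (hFext.2 hqQ hrQ hpF hmem)
  -- strict separation of R from the line L
  have hdisj : Disjoint R (L : Set (Pt N)) := Set.disjoint_left.mpr hLR
  obtain ⟨f, u, v, hfu, huv, hfv⟩ :=
    geometric_hahn_banach_compact_closed hRconv hRcomp L.convex
      (AffineSubspace.closed_of_finiteDimensional L) hdisj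
  have hpL : p ∈ (L : Set (Pt N)) := left_mem_affineSpan_pair ℝ p q
  have hqL : q ∈ (L : Set (Pt N)) := right_mem_affineSpan_pair ℝ p q
  -- f is constant on L
  have hconstL : ∀ z ∈ (L : Set (Pt N)), f z = f p := by
    intro z hz
    have hdir : z -ᵥ p ∈ L.direction := AffineSubspace.vsub_mem_direction hz hpL
    rw [hL, direction_affineSpan, vectorSpan_pair] at hdir
    obtain ⟨a, ha⟩ := Submodule.mem_span_singleton.mp hdir
    have hzeq : z = a • (p - q) + p := by
      have h' : a • (p - q) = z - p := by simpa using ha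
      linear_combination (norm := module) -h'
    have hfpq : f (p - q) = 0 := by
      by_contra hc
      set c : ℝ := f (p - q) with hcdef
      set tt : ℝ := (v - 1 - f p) / c with htt
      have hmem : tt • (p - q) + p ∈ (L : Set (Pt N)) := by
        have := smul_vsub_vadd_mem_affineSpan_pair (-tt) p q
        simp only [vsub_eq_sub, vadd_eq_add] at this
        rw [show tt • (p - q) + p = -tt • (q - p) + p by module]
        exact this
      have hval : f (tt • (p - q) + p) = tt * c + f p := by
        rw [map_add, map_smul, smul_eq_mul, hcdef]
      have := hfv _ hmem
      rw [hval, htt, div_mul_cancel₀ _ hc] at this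
      linarith
    rw [hzeq, map_add, map_smul, smul_eq_mul, hfpq, mul_zero, zero_add]
  have hfp_gt : v < f p := hfv p hpL
  -- affine functional vanishing on L, negative on R
  set h₀ : Pt N →ᵃ[ℝ] ℝ :=
    f.toLinearMap.toAffineMap - AffineMap.const ℝ (Pt N) (f p) with hh₀
  have h₀app : ∀ z : Pt N, h₀ z = f z - f p := fun z => rfl
  have h₀neg : ∀ z ∈ R, h₀ z < 0 := by
    intro z hz
    rw [h₀app]
    have := hfu z hz
    linarith
  have h₀p : h₀ p = 0 := by rw [h₀app, sub_self]
  have h₀q : h₀ q = 0 := by rw [h₀app, hconstL q hqL, sub_self]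
  -- F is not contained in L
  have hnotTrapped : ∀ (F' : Set (Pt N)), IsKFaceOf k Q F' → ∀ p' q' : Pt N,
      p' ∈ intrinsicInterior ℝ F' → q' ∉ F' → q' ∈ Q →
      ¬ (F' ⊆ (affineSpan ℝ ({p', q'} : Set (Pt N)) : Set (Pt N))) := by
    intro F' hF' p' q' hp' hq'F hq'Q hsub
    have hF'Q : F' ⊆ Q := hF'.1.subset
    have hp'F : p' ∈ F' := intrinsicInterior_subset hp'
    have hp'q' : p' ≠ q' := fun h => hq'F (h ▸ hp'F)
    have hle : affineSpan ℝ F' ≤ affineSpan ℝ ({p', q'} : Set (Pt N)) :=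
      affineSpan_le.mpr hsub
    have hdle : (affineSpan ℝ F').direction ≤
        (affineSpan ℝ ({p', q'} : Set (Pt N))).direction :=
      AffineSubspace.direction_le hle
    have hd2 : (affineSpan ℝ ({p', q'} : Set (Pt N))).direction =
        Submodule.span ℝ {p' -ᵥ q'} := by
      rw [direction_affineSpan, vectorSpan_pair]
    have hfr1 : Module.finrank ℝ (Submodule.span ℝ ({p' -ᵥ q'} : Set (Pt N))) = 1 :=
      finrank_span_singleton (by simpa [vsub_eq_sub, sub_eq_zero] using hp'q')
    rw [hd2] at hdle
    have hkle : k ≤ 1 := by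
      have := Submodule.finrank_mono hdle
      rwa [kface_finrank hF', hfr1] at this
    have hk : k = 1 := le_antisymm hkle hk1
    have hdeq : (affineSpan ℝ F').direction = Submodule.span ℝ {p' -ᵥ q'} :=
      Submodule.eq_of_le_of_finrank_eq hdle (by rw [kface_finrank hF', hfr1, hk])
    have hq'span : q' ∈ affineSpan ℝ F' := by
      have hvmem : q' -ᵥ p' ∈ (affineSpan ℝ F').direction := by
        rw [hdeq, Submodule.mem_span_singleton]
        exact ⟨-1, by simp only [vsub_eq_sub]; module⟩
      have := AffineSubspace.vadd_mem_of_mem_direction hvmem (mem_affineSpan ℝ hp'F)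
      simpa using this
    exact hq'F (key_extreme hF'.1.isExtreme hF'Q hp' hp'F hq'Q hq'span)
  obtain ⟨x, hxF, hxL⟩ : ∃ x ∈ F, x ∉ (L : Set (Pt N)) := by
    by_contra hc
    push_neg at hc
    exact hnotTrapped F hF p q hp hqF hqQ hc
  obtain ⟨y, hyG, hyL⟩ : ∃ y ∈ G, y ∉ (L : Set (Pt N)) := by
    by_contra hc
    push_neg at hc
    have hsub : G ⊆ (affineSpan ℝ ({q, p} : Set (Pt N)) : Set (Pt N)) := by
      intro z hz
      have := hc z hz
      rwa [hL, Set.pair_comm p q] at this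
    exact hnotTrapped G hG q p hq hpG hpQ hsub
  -- perturb to make it nonzero at x and y
  obtain ⟨h₁, h₁neg, h₁p, h₁q, h₁x, _⟩ :=
    perturb hRcomp hRne hpq hxL h₀neg h₀p h₀q (w := y)
  obtain ⟨h₂, h₂neg, h₂p, h₂q, h₂y, h₂xw⟩ :=
    perturb hRcomp hRne hpq hyL h₁neg h₁p h₁q (w := x)
  have h₂x : h₂ x ≠ 0 := h₂xw h₁x
  -- sign-changing points on F
  have signpts : ∀ (F' : Set (Pt N)) (p' x' : Pt N), p' ∈ intrinsicInterior ℝ F' →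
      x' ∈ F' → h₂ p' = 0 → h₂ x' ≠ 0 →
      ∃ a' ∈ F', ∃ b' ∈ F', h₂ a' < 0 ∧ 0 < h₂ b' := by
    intro F' p' x' hp' hx'F hp'0 hx'0
    obtain ⟨δ, hδ, hzF⟩ := relint_shift hp' (mem_affineSpan ℝ hx'F)
    have hzval : h₂ (δ • (p' - x') + p') = -δ * h₂ x' := by
      have h1 : δ • (p' - x') + p' = δ • (p' -ᵥ x') +ᵥ p' := rfl
      rw [h1, AffineMap.map_vadd, map_smul, AffineMap.linearMap_vsub]
      simp only [vsub_eq_sub, vadd_eq_add, smul_eq_mul, hp'0]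
      ring
    rcases lt_or_gt_of_ne hx'0 with hneg | hpos
    · exact ⟨x', hx'F, δ • (p' - x') + p', hzF, hneg, by rw [hzval]; nlinarith⟩
    · exact ⟨δ • (p' - x') + p', hzF, x', hx'F, by rw [hzval]; nlinarith, hpos⟩
  obtain ⟨aF, haF, bF, hbF, haFneg, hbFpos⟩ := signpts F p x hp hxF h₂p h₂x
  obtain ⟨aG, haG, bG, hbG, haGneg, hbGpos⟩ := signpts G q y hq hyG h₂q h₂y
  -- max of h₂ on R
  obtain ⟨z₀, hz₀R, hz₀max⟩ :=
    hRcomp.exists_isMaxOn hRne h₂.continuous_of_finiteDimensional.continuousOn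
  have hCneg : h₂ z₀ < 0 := h₂neg z₀ hz₀R
  -- vertices lie in S
  have hvert : ∀ w : Pt N, IsVertexOf Q w → w ∈ S := by
    intro w hw
    have hwext : IsExtreme ℝ Q {w} := (hw.1 : IsExposed ℝ Q {w}).isExtreme
    have : w ∈ Q.extremePoints ℝ := hwext.mem_extremePoints
    rw [hQeq] at this
    exact extremePoints_convexHull_subset this
  -- choose the shift t
  set μ : ℝ := min (min (-h₂ aF) (h₂ bF)) (min (min (-h₂ aG) (h₂ bG)) (-h₂ z₀)) with hμ
  have hμpos : 0 < μ := by
    refine lt_min (lt_min (by linarith) hbFpos) (lt_min (lt_min (by linarith) hbGpos) (by linarith))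
  have hμ1 : μ ≤ -h₂ aF := le_trans (min_le_left _ _) (min_le_left _ _)
  have hμ2 : μ ≤ h₂ bF := le_trans (min_le_left _ _) (min_le_right _ _)
  have hμ3 : μ ≤ -h₂ aG := le_trans (min_le_right _ _) (le_trans (min_le_left _ _) (min_le_left _ _))
  have hμ4 : μ ≤ h₂ bG := le_trans (min_le_right _ _) (le_trans (min_le_left _ _) (min_le_right _ _))
  have hμ5 : μ ≤ -h₂ z₀ := le_trans (min_le_right _ _) (min_le_right _ _)
  have hInf : (Set.Ioo (-μ) μ \ ((fun w => -h₂ w) '' S)).Nonempty :=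
    ((Set.Ioo_infinite (by linarith)).diff (hSfin.image _)).nonempty
  obtain ⟨t, ⟨htlo, hthi⟩, htT⟩ := hInf
  -- the final affine functional and hyperplane
  set hfin : Pt N →ᵃ[ℝ] ℝ := h₂ + AffineMap.const ℝ (Pt N) t with hhfin
  have hfinapp : ∀ z : Pt N, hfin z = h₂ z + t := fun z => rfl
  have haF' : hfin aF < 0 := by rw [hfinapp]; linarith
  have hbF' : 0 < hfin bF := by rw [hfinapp]; linarith
  have haG' : hfin aG < 0 := by rw [hfinapp]; linarith
  have hbG' : 0 < hfin bG := by rw [hfinapp]; linarith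
  have hlin : hfin.linear ≠ 0 := by
    intro hzero
    have : hfin bF = hfin aF := by
      have h1 : bF = (bF -ᵥ aF) +ᵥ aF := by simp
      rw [h1, AffineMap.map_vadd, hzero]
      simp
    linarith
  -- the zero of hfin on a segment with a sign change
  have hcross : ∀ (F' : Set (Pt N)), Convex ℝ F' → ∀ a' ∈ F', ∀ b' ∈ F',
      hfin a' < 0 → 0 < hfin b' → ∃ z ∈ F', hfin z = 0 := by
    intro F' hconv a' ha' b' hb' hna hpb
    set s : ℝ := -hfin a' / (hfin b' - hfin a') with hs
    have hden : 0 < hfin b' - hfin a' := by linarith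
    have hs0 : 0 ≤ s := le_of_lt (div_pos (by linarith) hden)
    have hs1 : s ≤ 1 := by
      rw [hs, div_le_one hden]; linarith
    refine ⟨AffineMap.lineMap a' b' s, ?_, ?_⟩
    · have : AffineMap.lineMap a' b' s ∈ segment ℝ a' b' := by
        rw [segment_eq_image_lineMap]
        exact ⟨s, ⟨hs0, hs1⟩, rfl⟩
      exact hconv.segment_subset ha' hb' this
    · rw [AffineMap.apply_lineMap, AffineMap.lineMap_apply_module']
      rw [hs]
      field_simp
      rw [smul_eq_mul, neg_mul, div_mul_cancel₀ _ hden.ne']; ring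
  obtain ⟨zF, hzFF, hzF0⟩ := hcross F hFconv aF haF bF hbF haF' hbF'
  obtain ⟨zG, hzGG, hzG0⟩ := hcross G hGconv aG haG bG hbG haG' hbG'
  refine ⟨{z | hfin z = 0}, ⟨hfin, hlin, rfl⟩, ⟨zF, hzF0, hzFF⟩, ⟨zG, hzG0, hzGG⟩, ?_, ?_⟩
  · rw [Set.eq_empty_iff_forall_notMem]
    rintro z ⟨hzH, hzR⟩
    have h1 : h₂ z ≤ h₂ z₀ := hz₀max hzR
    have : hfin z < 0 := by rw [hfinapp]; linarith
    rw [Set.mem_setOf_eq] at hzH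
    exact absurd hzH (ne_of_lt this)
  · intro w hw hwH
    have hwS : w ∈ S := hvert w hw
    rw [Set.mem_setOf_eq, hfinapp] at hwH
    exact htT ⟨w, hwS, show -h₂ w = t by linarith⟩
end

section
/- Let Q be a polytope and H an affine hyperplane that intersects Q but contains no vertex of Q. Then the map φ : F ↦ F ∩ H is an isomorphism of partially ordered sets (ordered by inclusion) from the set of faces of Q that meet H onto the set of nonempty faces of the polytope Q ∩ H. -/
open Set Classical

variable {N : ℕ}


lemma hull_le_of_forall_le {S : Set (Pt N)} {L : Pt N →L[ℝ] ℝ} {c : ℝ}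
    (h : ∀ s ∈ S, L s ≤ c) {x : Pt N} (hx : x ∈ convexHull ℝ S) : L x ≤ c :=
  convexHull_min h (convex_halfSpace_le L.toLinearMap.isLinear c) hx

lemma argmax_hull (S : Finset (Pt N)) (L : Pt N →L[ℝ] ℝ) (c : ℝ)
    (hle : ∀ s ∈ S, L s ≤ c) (hex : ∃ s ∈ S, L s = c) :
    {x ∈ convexHull ℝ (S : Set (Pt N)) | ∀ y ∈ convexHull ℝ (S : Set (Pt N)), L y ≤ L x}
      = convexHull ℝ (↑(S.filter (fun s => L s = c)) : Set (Pt N)) := by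
  have hleh : ∀ x ∈ convexHull ℝ (S : Set (Pt N)), L x ≤ c :=
    fun x hx => hull_le_of_forall_le (by simpa using hle) hx
  ext x
  constructor
  · rintro ⟨hxQ, hxmax⟩
    have hxc : L x = c := by
      obtain ⟨s₀, hs₀S, hs₀c⟩ := hex
      have : c ≤ L x := hs₀c ▸ hxmax _ (subset_convexHull ℝ _ (by exact_mod_cast hs₀S))
      exact le_antisymm (hleh x hxQ) this
    obtain ⟨w, hw0, hw1, hwx⟩ := Finset.mem_convexHull'.1 hxQ
    have hsum0 : ∑ y ∈ S, w y * (c - L y) = 0 := by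
      have hLx : ∑ y ∈ S, w y * L y = L x := by
        rw [← hwx, map_sum]; simp [smul_eq_mul]
      have : ∑ y ∈ S, w y * (c - L y) = (∑ y ∈ S, w y) * c - ∑ y ∈ S, w y * L y := by
        rw [Finset.sum_mul, ← Finset.sum_sub_distrib]
        exact Finset.sum_congr rfl fun y _ => by ring
      rw [this, hw1, hLx, hxc]; ring
    have hkey : ∀ y ∈ S, w y ≠ 0 → L y = c := by
      intro y hy hwy
      have h0 := (Finset.sum_eq_zero_iff_of_nonneg
        (fun i hi => mul_nonneg (hw0 i hi) (sub_nonneg.2 (hle i hi)))).1 hsum0 y hy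
      rcases mul_eq_zero.1 h0 with h | h
      · exact absurd h hwy
      · linarith [sub_eq_zero.1 h]
    apply Finset.mem_convexHull'.2
    refine ⟨w, fun y hy => hw0 y (Finset.filter_subset _ _ hy), ?_, ?_⟩
    · rw [Finset.sum_subset (Finset.filter_subset _ _)]
      · exact hw1
      · intro y hy hyn
        by_contra hne
        exact hyn (Finset.mem_filter.2 ⟨hy, hkey y hy hne⟩)
    · rw [Finset.sum_subset (Finset.filter_subset _ _)]
      · exact hwx
      · intro y hy hyn
        have : w y = 0 := by
          by_contra hne
          exact hyn (Finset.mem_filter.2 ⟨hy, hkey y hy hne⟩)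
        simp [this]
  · intro hx
    have hxQ : x ∈ convexHull ℝ (S : Set (Pt N)) :=
      convexHull_mono (by exact_mod_cast Finset.filter_subset _ _) hx
    have hLx : L x = c := by
      have hsub : convexHull ℝ (↑(S.filter (fun s => L s = c)) : Set (Pt N)) ⊆ {w | L w = c} := by
        apply convexHull_min
        · intro s hs
          simp only [Finset.coe_filter, mem_setOf_eq] at hs
          exact hs.2
        · exact convex_hyperplane L.toLinearMap.isLinear c
      exact hsub hx
    exact ⟨hxQ, fun y hy => hLx ▸ hleh y hy⟩

lemma isExposed_self (A : Set (Pt N)) : IsExposed ℝ A A :=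
  fun _ => ⟨0, by ext x; simp⟩

lemma isExposed_trans (S : Finset (Pt N)) {F G : Set (Pt N)}
    (hF : IsExposed ℝ (convexHull ℝ (S : Set (Pt N))) F) (hG : IsExposed ℝ F G) :
    IsExposed ℝ (convexHull ℝ (S : Set (Pt N))) G := by
  intro hGne
  obtain ⟨L₂, hG2⟩ := hG hGne
  have hFne : F.Nonempty := hGne.mono hG.subset
  obtain ⟨L₁, hF1⟩ := hF hFne
  have hSne : S.Nonempty := by
    have h1 : (convexHull ℝ (S : Set (Pt N))).Nonempty := hFne.mono hF.subset
    exact_mod_cast convexHull_nonempty_iff.1 h1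
  obtain ⟨s₁, hs₁S, hs₁⟩ := S.exists_max_image L₁ hSne
  set c₁ := L₁ s₁ with hc₁
  set T := S.filter (fun s => L₁ s = c₁) with hTdef
  have hFT : F = convexHull ℝ (T : Set (Pt N)) := by
    rw [hF1]; exact argmax_hull S L₁ c₁ hs₁ ⟨s₁, hs₁S, rfl⟩
  have hTne : T.Nonempty := ⟨s₁, Finset.mem_filter.2 ⟨hs₁S, rfl⟩⟩
  obtain ⟨s₂, hs₂T, hs₂⟩ := T.exists_max_image L₂ hTne
  set c₂ := L₂ s₂ with hc₂
  set U := T.filter (fun s => L₂ s = c₂) with hUdef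
  have hGU : G = convexHull ℝ (U : Set (Pt N)) := by
    rw [hG2, hFT]; exact argmax_hull T L₂ c₂ hs₂ ⟨s₂, hs₂T, rfl⟩
  have hposc : ∀ s ∈ S, s ∉ T → 0 < c₁ - L₁ s := by
    intro s hsS hsT
    have h1 : L₁ s ≤ c₁ := hs₁ s hsS
    have h2 : L₁ s ≠ c₁ := fun h => hsT (Finset.mem_filter.2 ⟨hsS, h⟩)
    cases lt_or_eq_of_le h1 with
    | inl h => linarith
    | inr h => exact absurd h h2
  obtain ⟨ε, hε0, hεlt⟩ : ∃ ε > 0, ∀ s ∈ S, s ∉ T → ε * (L₂ s - c₂) < c₁ - L₁ s := by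
    set B := S.filter (fun s => s ∉ T) with hBdef
    by_cases hB : B.Nonempty
    · set ε := B.inf' hB (fun s => (c₁ - L₁ s) / (1 + |L₂ s - c₂|)) with hεdef
      have hεpos : (0:ℝ) < ε := by
        rw [hεdef, Finset.lt_inf'_iff]
        intro t htB
        obtain ⟨htS, htT⟩ := Finset.mem_filter.1 htB
        exact div_pos (hposc t htS htT) (by positivity)
      refine ⟨ε, hεpos, ?_⟩
      intro s hsS hsT
      have hsB : s ∈ B := by
        simp only [hBdef, Finset.mem_filter]
        exact ⟨hsS, hsT⟩
      have hle2 : ε ≤ (c₁ - L₁ s) / (1 + |L₂ s - c₂|) := Finset.inf'_le _ hsB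
      have hmul : ε * (1 + |L₂ s - c₂|) ≤ c₁ - L₁ s := by
        rw [← le_div_iff₀ (by positivity)]; exact hle2
      have habs : L₂ s - c₂ ≤ |L₂ s - c₂| := le_abs_self _
      nlinarith [abs_nonneg (L₂ s - c₂)]
    · refine ⟨1, one_pos, ?_⟩
      intro s hsS hsT
      exfalso
      rw [Finset.not_nonempty_iff_eq_empty] at hB
      have hsB : s ∈ B := by
        simp only [hBdef, Finset.mem_filter]
        exact ⟨hsS, hsT⟩
      rw [hB] at hsB
      exact absurd hsB (Finset.notMem_empty s)
  refine ⟨L₁ + ε • L₂, ?_⟩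
  have hTsub : ∀ s ∈ T, L₁ s = c₁ ∧ L₂ s ≤ c₂ := fun s hs =>
    ⟨(Finset.mem_filter.1 hs).2, hs₂ s hs⟩
  have hle3 : ∀ s ∈ S, (L₁ + ε • L₂) s ≤ c₁ + ε * c₂ := by
    intro s hsS
    by_cases hsT : s ∈ T
    · obtain ⟨h1, h2⟩ := hTsub s hsT
      simp only [ContinuousLinearMap.add_apply, ContinuousLinearMap.smul_apply, smul_eq_mul]
      nlinarith
    · have := hεlt s hsS hsT
      simp only [ContinuousLinearMap.add_apply, ContinuousLinearMap.smul_apply, smul_eq_mul]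
      nlinarith
  have hex3 : ∃ s ∈ S, (L₁ + ε • L₂) s = c₁ + ε * c₂ := by
    refine ⟨s₂, Finset.filter_subset _ _ hs₂T, ?_⟩
    obtain ⟨h1, _⟩ := hTsub s₂ hs₂T
    simp only [ContinuousLinearMap.add_apply, ContinuousLinearMap.smul_apply, smul_eq_mul, h1]
    rfl
  have hfe : S.filter (fun s => (L₁ + ε • L₂) s = c₁ + ε * c₂) = U := by
    ext s
    simp only [Finset.mem_filter, ContinuousLinearMap.add_apply,
      ContinuousLinearMap.smul_apply, smul_eq_mul, hUdef]
    constructor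
    · rintro ⟨hsS, heq⟩
      by_cases hsT : s ∈ T
      · obtain ⟨h1, _⟩ := hTsub s hsT
        refine ⟨hsT, ?_⟩
        rw [h1] at heq
        have : ε * L₂ s = ε * c₂ := by linarith
        exact mul_left_cancel₀ (ne_of_gt hε0) this
      · have := hεlt s hsS hsT
        exfalso; nlinarith
    · rintro ⟨hsT, h2⟩
      obtain ⟨h1, _⟩ := hTsub s hsT
      exact ⟨Finset.filter_subset _ _ hsT, by rw [h1, h2]⟩
  rw [hGU, ← hfe]
  exact (argmax_hull S (L₁ + ε • L₂) (c₁ + ε * c₂) hle3 hex3).symm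

lemma isExposed_singleton_of_hull {S : Finset (Pt N)} :
    ∀ S : Finset (Pt N), S.Nonempty →
    ∃ v ∈ convexHull ℝ (S : Set (Pt N)), IsExposed ℝ (convexHull ℝ (S : Set (Pt N))) {v} := by
  intro S
  induction S using Finset.strongInduction with
  | _ S ih =>
    intro hSne
    by_cases hsub : ∃ a ∈ S, ∃ b ∈ S, a ≠ b
    · obtain ⟨a, ha, b, hb, hab⟩ := hsub
      set L : Pt N →L[ℝ] ℝ := innerSL ℝ (a - b) with hLdef
      have hLab : L b < L a := by
        have h1 : (inner ℝ (a - b) (a - b) : ℝ) = L a - L b := by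
          rw [hLdef, innerSL_apply_apply, innerSL_apply_apply, inner_sub_right]
        have hne : (inner ℝ (a - b) (a - b) : ℝ) ≠ 0 :=
          fun h => (sub_ne_zero.2 hab) (inner_self_eq_zero.1 h)
        have h2 : (0:ℝ) < inner ℝ (a - b) (a - b) :=
          lt_of_le_of_ne real_inner_self_nonneg (Ne.symm hne)
        linarith
      obtain ⟨m, hmS, hm⟩ := S.exists_max_image L hSne
      set T := S.filter (fun s => L s = L m) with hTdef
      have hbT : b ∉ T := by
        intro hbT
        have : L b = L m := (Finset.mem_filter.1 hbT).2
        have : L a ≤ L m := hm a ha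
        linarith
      have hTS : T ⊂ S := ⟨Finset.filter_subset _ _, fun h => hbT (h hb)⟩
      have hTne : T.Nonempty := ⟨m, Finset.mem_filter.2 ⟨hmS, rfl⟩⟩
      obtain ⟨v, hv, hexp⟩ := ih T hTS hTne
      have hface : IsExposed ℝ (convexHull ℝ (S : Set (Pt N))) (convexHull ℝ (T : Set (Pt N))) := by
        have harg := argmax_hull S L (L m) hm ⟨m, hmS, rfl⟩
        rw [hTdef, ← harg]
        exact fun _ => ⟨L, rfl⟩
      refine ⟨v, ?_, isExposed_trans S hface hexp⟩
      exact convexHull_mono (by exact_mod_cast Finset.filter_subset _ _) hv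
    · push_neg at hsub
      obtain ⟨a, ha⟩ := hSne
      have hSa : (S : Set (Pt N)) = {a} := by
        apply Subset.antisymm
        · intro x hx
          exact mem_singleton_iff.2 (hsub x (by exact_mod_cast hx) a ha)
        · intro x hx
          rw [mem_singleton_iff] at hx
          exact_mod_cast hx ▸ ha
      refine ⟨a, ?_, ?_⟩
      · rw [hSa, convexHull_singleton]; exact mem_singleton a
      · have hh : convexHull ℝ (S : Set (Pt N)) = {a} := by
          rw [hSa, convexHull_singleton]
        rw [hh]

lemma face_exists_vertex {S : Finset (Pt N)} {F : Set (Pt N)}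
    (hF : IsExposed ℝ (convexHull ℝ (S : Set (Pt N))) F) (hFne : F.Nonempty) :
    ∃ v ∈ F, IsVertexOf (convexHull ℝ (S : Set (Pt N))) v := by
  obtain ⟨L, hL⟩ := hF hFne
  have hSne : S.Nonempty := by
    have h1 : (convexHull ℝ (S : Set (Pt N))).Nonempty := hFne.mono hF.subset
    exact_mod_cast convexHull_nonempty_iff.1 h1
  obtain ⟨m, hmS, hm⟩ := S.exists_max_image L hSne
  set T := S.filter (fun s => L s = L m) with hTdef
  have hFT : F = convexHull ℝ (T : Set (Pt N)) := by
    rw [hL]; exact argmax_hull S L (L m) hm ⟨m, hmS, rfl⟩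
  have hTne : T.Nonempty := ⟨m, Finset.mem_filter.2 ⟨hmS, rfl⟩⟩
  obtain ⟨v, hv, hexp⟩ := isExposed_singleton_of_hull (S := S) T hTne
  have hvF : v ∈ F := hFT ▸ hv
  have hvexp : IsExposed ℝ (convexHull ℝ (S : Set (Pt N))) {v} := by
    apply isExposed_trans S hF
    rw [hFT]; exact hexp
  refine ⟨v, hvF, hvexp, ?_⟩
  unfold faceDim
  rw [if_neg (Set.singleton_ne_empty v)]
  rw [direction_affineSpan, vectorSpan_singleton]
  simp [finrank_bot]

lemma exists_neg_side {S : Finset (Pt N)} {f : Pt N →ᵃ[ℝ] ℝ}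
    (hv : ∀ v, IsVertexOf (convexHull ℝ (S : Set (Pt N))) v → f v ≠ 0)
    {F : Set (Pt N)} (hF : IsExposed ℝ (convexHull ℝ (S : Set (Pt N))) F)
    {p : Pt N} (hpF : p ∈ F) (hfp : f p = 0) : ∃ y ∈ F, f y < 0 := by
  by_contra hcon
  push_neg at hcon
  set L : Pt N →L[ℝ] ℝ := -(LinearMap.toContinuousLinearMap f.linear) with hLdef
  have hkey : ∀ x y : Pt N, L x - L y = f y - f x := by
    intro x y
    have h1 : f.linear (y - x) = f y - f x := by
      have := f.linearMap_vsub y x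
      rwa [vsub_eq_sub, vsub_eq_sub] at this
    have h2 : f.linear (y - x) = f.linear y - f.linear x := map_sub _ _ _
    simp only [hLdef, ContinuousLinearMap.neg_apply, LinearMap.coe_toContinuousLinearMap']
    linarith
  have hG : {x | x ∈ F ∧ f x = 0} = {x ∈ F | ∀ y ∈ F, L y ≤ L x} := by
    ext x
    constructor
    · rintro ⟨hxF, hfx⟩
      refine ⟨hxF, fun y hy => ?_⟩
      have h1 := hcon y hy
      have h2 := hkey x y
      linarith
    · rintro ⟨hxF, hmax⟩
      refine ⟨hxF, ?_⟩
      have h1 := hmax p hpF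
      have h2 := hcon x hxF
      have h3 := hkey x p
      linarith
  have hGexp : IsExposed ℝ F {x | x ∈ F ∧ f x = 0} := by
    rw [hG]; exact fun _ => ⟨L, rfl⟩
  obtain ⟨w, hwmem, hwvert⟩ := face_exists_vertex (S := S)
    (isExposed_trans S hF hGexp) ⟨p, hpF, hfp⟩
  exact hv w hwvert hwmem.2

lemma sect_eq {Q H : Set (Pt N)} (L : Pt N →L[ℝ] ℝ) {F : Set (Pt N)}
    (hFdef : F = {x ∈ Q | ∀ y ∈ Q, L y ≤ L x}) (hne : (F ∩ H).Nonempty) :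
    F ∩ H = {x ∈ Q ∩ H | ∀ y ∈ Q ∩ H, L y ≤ L x} := by
  obtain ⟨p, hpF, hpH⟩ := hne
  rw [hFdef] at hpF ⊢
  ext x
  constructor
  · rintro ⟨⟨hxQ, hxmax⟩, hxH⟩
    exact ⟨⟨hxQ, hxH⟩, fun y hy => hxmax y hy.1⟩
  · rintro ⟨⟨hxQ, hxH⟩, hmax⟩
    have h2 : L p ≤ L x := hmax p ⟨hpF.1, hpH⟩
    exact ⟨⟨hxQ, fun y hy => (hpF.2 y hy).trans h2⟩, hxH⟩

lemma cross_point {f : Pt N →ᵃ[ℝ] ℝ} {F : Set (Pt N)} (hconv : Convex ℝ F)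
    {a b : Pt N} (ha : a ∈ F) (hb : b ∈ F) (hfa : f a < 0) (hfb : 0 < f b) :
    ∃ p ∈ F, f p = 0 ∧ ∃ t : ℝ, 0 < t ∧ t < 1 ∧ p = AffineMap.lineMap a b t := by
  set t : ℝ := f a / (f a - f b) with htdef
  have hden : f a - f b < 0 := by linarith
  have h_t : t * (f a - f b) = f a := div_mul_cancel₀ _ (ne_of_lt hden)
  have ht0 : 0 < t := by nlinarith
  have ht1 : t < 1 := by nlinarith
  refine ⟨AffineMap.lineMap a b t, ?_, ?_, t, ht0, ht1, rfl⟩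
  · have hseg : AffineMap.lineMap a b t ∈ segment ℝ a b := by
      rw [segment_eq_image_lineMap]
      exact ⟨t, ⟨le_of_lt ht0, le_of_lt ht1⟩, rfl⟩
    exact hconv.segment_subset ha hb hseg
  · rw [AffineMap.apply_lineMap, AffineMap.lineMap_apply]
    simp only [vsub_eq_sub, vadd_eq_add, smul_eq_mul]
    nlinarith

lemma lineMap_CLM (L : Pt N →L[ℝ] ℝ) (a b : Pt N) (t : ℝ) :
    L (AffineMap.lineMap a b t) = L a + t * (L b - L a) := by
  rw [AffineMap.lineMap_apply]
  simp only [vsub_eq_sub, vadd_eq_add, smul_eq_mul, map_add, map_smul, map_sub, smul_eq_mul]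
  ring

lemma subset_of_sect_subset {S : Finset (Pt N)} {f : Pt N →ᵃ[ℝ] ℝ}
    (hv : ∀ v, IsVertexOf (convexHull ℝ (S : Set (Pt N))) v → f v ≠ 0)
    {F₁ F₂ : Set (Pt N)}
    (hF₁ : IsExposed ℝ (convexHull ℝ (S : Set (Pt N))) F₁)
    (hF₂ : IsExposed ℝ (convexHull ℝ (S : Set (Pt N))) F₂)
    (hne : (F₁ ∩ {x | f x = 0}).Nonempty)
    (hsub : F₁ ∩ {x | f x = 0} ⊆ F₂) : F₁ ⊆ F₂ := by
  obtain ⟨p₀, hp₀F, hp₀H⟩ := hne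
  have hp₀H' : f p₀ = 0 := hp₀H
  have hF₂ne : F₂.Nonempty := ⟨p₀, hsub ⟨hp₀F, hp₀H⟩⟩
  obtain ⟨L, hL⟩ := hF₂ hF₂ne
  have hconv : Convex ℝ F₁ := hF₁.convex (convex_convexHull ℝ _)
  have key : ∀ a b, a ∈ F₁ → b ∈ F₁ → f a < 0 → 0 < f b → a ∈ F₂ ∧ b ∈ F₂ := by
    intro a b haF hbF hfa hfb
    obtain ⟨p, hpF₁, hfp, t, ht0, ht1, hpt⟩ := cross_point hconv haF hbF hfa hfb
    have hpF₂ : p ∈ F₂ := hsub ⟨hpF₁, hfp⟩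
    rw [hL] at hpF₂
    have hLp := hpF₂.2
    have hLa : L a ≤ L p := hLp a (hF₁.subset haF)
    have hLb : L b ≤ L p := hLp b (hF₁.subset hbF)
    have hLcomb : L p = L a + t * (L b - L a) := by rw [hpt]; exact lineMap_CLM L a b t
    have hLaeq : L a = L p := by nlinarith
    have hLbeq : L b = L p := by nlinarith
    constructor
    · rw [hL]
      exact ⟨hF₁.subset haF, fun y hy => (hLp y hy).trans (le_of_eq hLaeq.symm)⟩
    · rw [hL]
      exact ⟨hF₁.subset hbF, fun y hy => (hLp y hy).trans (le_of_eq hLbeq.symm)⟩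
  intro x hxF₁
  rcases lt_trichotomy (f x) 0 with hx0 | hx0 | hx0
  · obtain ⟨z, hzF, hz⟩ : ∃ z ∈ F₁, 0 < f z := by
      obtain ⟨z, hzF, hz⟩ := exists_neg_side (f := -f) (S := S)
        (fun v hv' h => hv v hv' (by simpa using h)) hF₁ hp₀F (by simp [hp₀H'])
      refine ⟨z, hzF, ?_⟩
      have : -(f z) < 0 := by simpa using hz
      linarith
    exact (key x z hxF₁ hzF hx0 hz).1
  · exact hsub ⟨hxF₁, hx0⟩
  · obtain ⟨z, hzF, hz⟩ := exists_neg_side (f := f) (S := S) hv hF₁ hp₀F hp₀H'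
    exact (key z x hzF hxF₁ hz hx0).2

lemma surj_side {S : Finset (Pt N)} {f : Pt N →ᵃ[ℝ] ℝ}
    (hv : ∀ v, IsVertexOf (convexHull ℝ (S : Set (Pt N))) v → f v ≠ 0)
    (hQH : ((convexHull ℝ (S : Set (Pt N))) ∩ {x | f x = 0}).Nonempty)
    {F' : Set (Pt N)}
    (hF' : IsExposed ℝ ((convexHull ℝ (S : Set (Pt N))) ∩ {x | f x = 0}) F')
    (hne : F'.Nonempty) :
    ∃ F, IsExposed ℝ (convexHull ℝ (S : Set (Pt N))) F ∧ (F ∩ {x | f x = 0}).Nonempty ∧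
      F ∩ {x | f x = 0} = F' := by
  obtain ⟨l, hl⟩ := hF' hne
  obtain ⟨p₀, hp₀Q, hp₀H⟩ := hQH
  have hp₀H' : f p₀ = 0 := hp₀H
  -- points of S strictly on each side
  obtain ⟨z, hzQ, hz⟩ := exists_neg_side (f := f) (S := S) hv
    (isExposed_self _) hp₀Q hp₀H'
  obtain ⟨z', hz'Q, hz'⟩ := exists_neg_side (f := -f) (S := S)
    (fun v hv' h => hv v hv' (by simpa using h)) (isExposed_self _) hp₀Q (by simp [hp₀H'])
  have hz'pos : 0 < f z' := by
    have : -(f z') < 0 := by simpa using hz'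
    linarith
  have hSneg : ∃ s ∈ S, f s < 0 := by
    by_contra hcon
    push_neg at hcon
    have hQsub : convexHull ℝ (S : Set (Pt N)) ⊆ {x | 0 ≤ f x} :=
      convexHull_min (fun s hs => hcon s (by exact_mod_cast hs))
        ((convex_Ici (0:ℝ)).affine_preimage f)
    exact absurd (hQsub hzQ) (by simpa using hz)
  have hSpos : ∃ s ∈ S, 0 < f s := by
    by_contra hcon
    push_neg at hcon
    have hQsub : convexHull ℝ (S : Set (Pt N)) ⊆ {x | f x ≤ 0} :=
      convexHull_min (fun s hs => hcon s (by exact_mod_cast hs))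
        ((convex_Iic (0:ℝ)).affine_preimage f)
    exact absurd (hQsub hz'Q) (by simpa using hz'pos)
  obtain ⟨sneg, hsnegS, hsneg⟩ := hSneg
  obtain ⟨spos, hsposS, hspos⟩ := hSpos
  set Sc := S.filter (fun s => f s ≤ 0) with hScdef
  set Sp := S.filter (fun s => 0 < f s) with hSpdef
  have hsnegSc : sneg ∈ Sc := by
    rw [hScdef, Finset.mem_filter]; exact ⟨hsnegS, le_of_lt hsneg⟩
  have hsposSp : spos ∈ Sp := by
    rw [hSpdef, Finset.mem_filter]; exact ⟨hsposS, hspos⟩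
  have hScne : Sc.Nonempty := ⟨sneg, hsnegSc⟩
  have hSpne : Sp.Nonempty := ⟨spos, hsposSp⟩
  set ε := Sp.inf' hSpne f with hεdef
  have hεpos : 0 < ε := by
    rw [hεdef, Finset.lt_inf'_iff]
    intro s hs
    rw [hSpdef, Finset.mem_filter] at hs
    exact hs.2
  have hεle : ∀ s ∈ Sp, ε ≤ f s := fun s hs => Finset.inf'_le _ hs
  set D : ℝ → ℝ := fun lam => (Sp.sup' hSpne fun s => l s + lam * f s)
      - (Sc.sup' hScne fun s => l s + lam * f s) with hDdef
  have hDcont : Continuous D := by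
    apply Continuous.sub
    · exact Continuous.finset_sup'_apply hSpne
        (fun i _ => continuous_const.add (continuous_id.mul continuous_const))
    · exact Continuous.finset_sup'_apply hScne
        (fun i _ => continuous_const.add (continuous_id.mul continuous_const))
  set Cc := Sc.sup' hScne (fun s => l s) with hCcdef
  set Cp := Sp.sup' hSpne (fun s => l s) with hCpdef
  set lamp : ℝ := max 0 ((Cc - l spos) / ε) with hlampdef
  set lamm : ℝ := min 0 ((l sneg - Cp) / ε) with hlammdef
  have hlamp0 : 0 ≤ lamp := le_max_left _ _
  have hlamm0 : lamm ≤ 0 := min_le_left _ _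
  have hDp : 0 ≤ D lamp := by
    have h1 : l spos + lamp * ε ≤ Sp.sup' hSpne fun s => l s + lamp * f s := by
      refine le_trans ?_ (Finset.le_sup' _ hsposSp)
      have := hεle spos hsposSp
      nlinarith
    have h2 : (Sc.sup' hScne fun s => l s + lamp * f s) ≤ Cc := by
      rw [hCcdef]
      apply Finset.sup'_le
      intro s hs
      refine le_trans ?_ (Finset.le_sup' _ hs)
      have hfs : f s ≤ 0 := (Finset.mem_filter.1 hs).2
      nlinarith
    have h3 : Cc - l spos ≤ lamp * ε := by
      have : (Cc - l spos) / ε ≤ lamp := le_max_right _ _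
      calc Cc - l spos = ((Cc - l spos) / ε) * ε := by field_simp
        _ ≤ lamp * ε := mul_le_mul_of_nonneg_right this (le_of_lt hεpos)
    rw [hDdef]
    simp only
    linarith
  have hDm : D lamm ≤ 0 := by
    have h1 : (Sp.sup' hSpne fun s => l s + lamm * f s) ≤ Cp + lamm * ε := by
      apply Finset.sup'_le
      intro s hs
      have h1a : l s ≤ Cp := Finset.le_sup' _ hs
      have h1b : ε ≤ f s := hεle s hs
      nlinarith
    have h2 : l sneg ≤ Sc.sup' hScne fun s => l s + lamm * f s := by
      refine le_trans ?_ (Finset.le_sup' _ hsnegSc)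
      nlinarith
    have h3 : lamm * ε ≤ l sneg - Cp := by
      have : lamm ≤ (l sneg - Cp) / ε := min_le_right _ _
      calc lamm * ε ≤ ((l sneg - Cp) / ε) * ε := mul_le_mul_of_nonneg_right this (le_of_lt hεpos)
        _ = l sneg - Cp := by field_simp
    rw [hDdef]
    simp only
    linarith
  have hlamle : lamm ≤ lamp := le_trans hlamm0 hlamp0
  obtain ⟨lam0, _, hD0⟩ : ∃ lam0 ∈ Icc lamm lamp, D lam0 = 0 := by
    have := intermediate_value_Icc hlamle hDcont.continuousOn
    have h0mem : (0:ℝ) ∈ Icc (D lamm) (D lamp) := ⟨hDm, hDp⟩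
    obtain ⟨lam0, hmem, heq⟩ := this h0mem
    exact ⟨lam0, hmem, heq⟩
  set c₀ := Sp.sup' hSpne (fun s => l s + lam0 * f s) with hc₀def
  have hceq : Sc.sup' hScne (fun s => l s + lam0 * f s) = c₀ := by
    rw [hDdef] at hD0
    simp only at hD0
    rw [hc₀def]
    linarith
  have hglobal : ∀ s ∈ S, l s + lam0 * f s ≤ c₀ := by
    intro s hsS
    rcases le_or_gt (f s) 0 with h | h
    · have hmem : s ∈ Sc := by rw [hScdef, Finset.mem_filter]; exact ⟨hsS, h⟩
      rw [← hceq]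
      exact Finset.le_sup' (fun s => l s + lam0 * f s) hmem
    · have hmem : s ∈ Sp := by rw [hSpdef, Finset.mem_filter]; exact ⟨hsS, h⟩
      rw [hc₀def]
      exact Finset.le_sup' (fun s => l s + lam0 * f s) hmem
  obtain ⟨sa, hsaSc, hsa⟩ := Sc.exists_mem_eq_sup' hScne (fun s => l s + lam0 * f s)
  obtain ⟨sb, hsbSp, hsb⟩ := Sp.exists_mem_eq_sup' hSpne (fun s => l s + lam0 * f s)
  rw [hceq] at hsa
  rw [← hc₀def] at hsb
  have hsaS : sa ∈ S := Finset.filter_subset _ _ hsaSc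
  have hsbS : sb ∈ S := Finset.filter_subset _ _ hsbSp
  have hsafneg : f sa ≤ 0 := (Finset.mem_filter.1 hsaSc).2
  have hsbfpos : 0 < f sb := (Finset.mem_filter.1 hsbSp).2
  set Λ : Pt N →L[ℝ] ℝ := l + lam0 • (LinearMap.toContinuousLinearMap f.linear) with hΛdef
  have hfdecomp : ∀ x : Pt N, f.linear x = f x - f 0 := by
    intro x
    have := f.linearMap_vsub x 0
    rwa [vsub_eq_sub, vsub_eq_sub, sub_zero] at this
  have hΛs : ∀ x, Λ x = l x + lam0 * f x - lam0 * f 0 := by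
    intro x
    rw [hΛdef]
    simp only [ContinuousLinearMap.add_apply, ContinuousLinearMap.smul_apply,
      LinearMap.coe_toContinuousLinearMap', smul_eq_mul]
    rw [hfdecomp]
    ring
  set c₁ := c₀ - lam0 * f 0 with hc₁def
  have hle : ∀ s ∈ S, Λ s ≤ c₁ := by
    intro s hs
    rw [hΛs, hc₁def]
    have := hglobal s hs
    linarith
  have hexa : Λ sa = c₁ := by
    rw [hΛs, hc₁def, ← hsa]
  have hexb : Λ sb = c₁ := by
    rw [hΛs, hc₁def, ← hsb]
  set Q := convexHull ℝ (S : Set (Pt N)) with hQdef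
  set F : Set (Pt N) := {x ∈ Q | ∀ y ∈ Q, Λ y ≤ Λ x} with hFdef
  have hFexp : IsExposed ℝ Q F := fun _ => ⟨Λ, hFdef⟩
  have hFhull : F = convexHull ℝ (↑(S.filter fun s => Λ s = c₁) : Set (Pt N)) := by
    rw [hFdef]
    exact argmax_hull S Λ c₁ hle ⟨sa, hsaS, hexa⟩
  have hsaF : sa ∈ F := by
    rw [hFhull]
    exact subset_convexHull ℝ _ (by exact_mod_cast Finset.mem_filter.2 ⟨hsaS, hexa⟩)
  have hsbF : sb ∈ F := by
    rw [hFhull]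
    exact subset_convexHull ℝ _ (by exact_mod_cast Finset.mem_filter.2 ⟨hsbS, hexb⟩)
  have hFconv : Convex ℝ F := hFexp.convex (convex_convexHull ℝ _)
  obtain ⟨p, hpF, hpH⟩ : ∃ p ∈ F, f p = 0 := by
    rcases eq_or_lt_of_le hsafneg with heq | hlt
    · exact ⟨sa, hsaF, heq⟩
    · obtain ⟨p, hpF, hfp, _⟩ := cross_point hFconv hsaF hsbF hlt hsbfpos
      exact ⟨p, hpF, hfp⟩
  have hFH : (F ∩ {x | f x = 0}).Nonempty := ⟨p, hpF, hpH⟩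
  refine ⟨F, hFexp, hFH, ?_⟩
  have h1 : F ∩ {x | f x = 0} =
      {x ∈ Q ∩ {x | f x = 0} | ∀ y ∈ Q ∩ {x | f x = 0}, Λ y ≤ Λ x} := sect_eq Λ hFdef hFH
  rw [h1, hl]
  ext x
  simp only [mem_setOf_eq, mem_inter_iff]
  constructor
  · rintro ⟨⟨hxQ, hxH⟩, hmax⟩
    refine ⟨⟨hxQ, hxH⟩, fun y hy => ?_⟩
    have h2 := hmax y ⟨hy.1, hy.2⟩
    rw [hΛs, hΛs] at h2
    have hfy : f y = 0 := hy.2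
    have hfx : f x = 0 := hxH
    rw [hfy, hfx] at h2
    linarith
  · rintro ⟨⟨hxQ, hxH⟩, hmax⟩
    refine ⟨⟨hxQ, hxH⟩, fun y hy => ?_⟩
    have h2 := hmax y ⟨hy.1, hy.2⟩
    rw [hΛs, hΛs]
    have hfy : f y = 0 := hy.2
    have hfx : f x = 0 := hxH
    rw [hfy, hfx]
    linarith

lemma master {S : Finset (Pt N)} {f : Pt N →ᵃ[ℝ] ℝ}
    (hQH : ((convexHull ℝ (S : Set (Pt N))) ∩ {x | f x = 0}).Nonempty)
    (hv : ∀ v, IsVertexOf (convexHull ℝ (S : Set (Pt N))) v → f v ≠ 0) :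
    ∃ e : {F : Set (Pt N) // IsFaceOf (convexHull ℝ (S : Set (Pt N))) F ∧
            (F ∩ {x | f x = 0}).Nonempty} ≃o
          {F' : Set (Pt N) // IsFaceOf ((convexHull ℝ (S : Set (Pt N))) ∩ {x | f x = 0}) F' ∧
            F'.Nonempty},
      ∀ F, (e F : Set (Pt N)) = (F : Set (Pt N)) ∩ {x | f x = 0} := by
  have hmapexp : ∀ F : Set (Pt N), IsExposed ℝ (convexHull ℝ (S : Set (Pt N))) F →
      (F ∩ {x | f x = 0}).Nonempty →
      IsExposed ℝ ((convexHull ℝ (S : Set (Pt N))) ∩ {x | f x = 0}) (F ∩ {x | f x = 0}) := by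
    intro F hF hFH _
    obtain ⟨L, hL⟩ := hF (hFH.mono inter_subset_left)
    exact ⟨L, sect_eq L hL hFH⟩
  set φ : {F : Set (Pt N) // IsFaceOf (convexHull ℝ (S : Set (Pt N))) F ∧
            (F ∩ {x | f x = 0}).Nonempty} →
          {F' : Set (Pt N) // IsFaceOf ((convexHull ℝ (S : Set (Pt N))) ∩ {x | f x = 0}) F' ∧
            F'.Nonempty} :=
    fun F => ⟨F.1 ∩ {x | f x = 0}, hmapexp F.1 F.2.1 F.2.2, F.2.2⟩ with hφdef
  have hmono : ∀ F₁ F₂ : {F : Set (Pt N) // IsFaceOf (convexHull ℝ (S : Set (Pt N))) F ∧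
      (F ∩ {x | f x = 0}).Nonempty},
      (F₁.1 ∩ {x | f x = 0} ⊆ F₂.1 ∩ {x | f x = 0}) ↔ F₁.1 ⊆ F₂.1 := by
    intro F₁ F₂
    constructor
    · intro h
      exact subset_of_sect_subset hv F₁.2.1 F₂.2.1 F₁.2.2 (h.trans inter_subset_left)
    · intro h
      exact inter_subset_inter_left _ h
  have hbij : Function.Bijective φ := by
    constructor
    · intro F₁ F₂ heq
      have h1 : F₁.1 ∩ {x | f x = 0} = F₂.1 ∩ {x | f x = 0} := congrArg Subtype.val heq
      apply Subtype.ext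
      exact Subset.antisymm ((hmono F₁ F₂).1 h1.subset) ((hmono F₂ F₁).1 h1.superset)
    · rintro ⟨F', hF'exp, hF'ne⟩
      obtain ⟨F, hFexp, hFH, hFeq⟩ := surj_side hv hQH hF'exp hF'ne
      exact ⟨⟨F, hFexp, hFH⟩, Subtype.ext hFeq⟩
  refine ⟨{ toEquiv := Equiv.ofBijective φ hbij, map_rel_iff' := ?_ }, fun F => rfl⟩
  intro F₁ F₂
  show φ F₁ ≤ φ F₂ ↔ F₁ ≤ F₂
  rw [← Subtype.coe_le_coe, ← Subtype.coe_le_coe]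
  exact hmono F₁ F₂

/-- For a polytope `Q` and a hyperplane `H` meeting `Q` but no
vertex of `Q`, the map `F ↦ F ∩ H` is a poset isomorphism from the faces of `Q`
meeting `H` onto the nonempty faces of `Q ∩ H`. -/
theorem face_poset_iso_of_hyperplane_section {N : ℕ} (Q H : Set (Pt N))
    (hQ : IsPolytope Q) (hH : IsHyperplane H) (hQH : (Q ∩ H).Nonempty)
    (hv : ∀ v : Pt N, IsVertexOf Q v → v ∉ H) :
    ∃ e : {F : Set (Pt N) // IsFaceOf Q F ∧ (F ∩ H).Nonempty} ≃o
          {F' : Set (Pt N) // IsFaceOf (Q ∩ H) F' ∧ F'.Nonempty},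
      ∀ F, (e F : Set (Pt N)) = (F : Set (Pt N)) ∩ H := by
  obtain ⟨S₀, hS₀fin, rfl⟩ := hQ
  obtain ⟨f, hflin, rfl⟩ := hH
  have hcoe : ((hS₀fin.toFinset : Finset (Pt N)) : Set (Pt N)) = S₀ := hS₀fin.coe_toFinset
  have hQH' : ((convexHull ℝ ((hS₀fin.toFinset : Finset (Pt N)) : Set (Pt N)))
      ∩ {x | f x = 0}).Nonempty := by rw [hcoe]; exact hQH
  have hv' : ∀ v, IsVertexOf (convexHull ℝ ((hS₀fin.toFinset : Finset (Pt N)) : Set (Pt N))) v →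
      f v ≠ 0 := by
    rw [hcoe]
    intro v hv1 hv2
    exact hv v hv1 hv2
  have := master hQH' hv'
  rw [hcoe] at this
  exact this
end

section
/- Let Q be a polytope and H an affine hyperplane containing no vertex of Q. If F is a face of Q that meets H, then F is not contained in H, H meets the relative interior of F, and dim(F ∩ H) = dim(F) − 1. -/
open Set Classical

/-! ### Auxiliary lemmas -/

/-- An affine functional applied to a center of mass. -/
lemma affineMap_centerMass {N : ℕ} (f : Pt N →ᵃ[ℝ] ℝ) (t : Finset (Pt N)) (w : Pt N → ℝ)
    (hw : ∑ y ∈ t, w y = 1) : f (t.centerMass w id) = ∑ y ∈ t, w y * f y := by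
  rw [← affineCombination_eq_centerMass hw, t.map_affineCombination id w hw f,
    affineCombination_eq_centerMass hw, Finset.centerMass_eq_of_sum_1 _ _ hw]
  simp [smul_eq_mul]

lemma exists_neg_of_affine {N : ℕ} (f : Pt N →ᵃ[ℝ] ℝ) {E : Set (Pt N)} (hE : E.Finite)
    (hne : ∀ y ∈ E, f y ≠ 0) {z : Pt N} (hz : z ∈ convexHull ℝ E) (hfz : f z = 0) :
    ∃ b ∈ E, f b < 0 := by
  rw [hE.convexHull_eq] at hz
  obtain ⟨w, hw0, hw1, hwz⟩ := hz
  by_contra hno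
  push_neg at hno
  have hpos : ∀ y ∈ hE.toFinset, 0 < f y := fun y hy =>
    lt_of_le_of_ne (hno y (hE.mem_toFinset.1 hy)) (Ne.symm (hne y (hE.mem_toFinset.1 hy)))
  obtain ⟨y0, hy0t, hy0⟩ : ∃ y ∈ hE.toFinset, 0 < w y := by
    by_contra h
    push_neg at h
    have : ∑ y ∈ hE.toFinset, w y ≤ 0 := Finset.sum_nonpos h
    linarith
  have hsum : 0 < ∑ y ∈ hE.toFinset, w y * f y :=
    Finset.sum_pos' (fun y hy => mul_nonneg (hw0 y (hE.mem_toFinset.1 hy)) (hpos y hy).le)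
      ⟨y0, hy0t, mul_pos hy0 (hpos y0 hy0t)⟩
  rw [← affineMap_centerMass f _ w hw1, hwz, hfz] at hsum
  exact lt_irrefl 0 hsum

lemma exists_pos_and_neg {N : ℕ} (f : Pt N →ᵃ[ℝ] ℝ) {E : Set (Pt N)} (hE : E.Finite)
    (hne : ∀ y ∈ E, f y ≠ 0) {z : Pt N} (hz : z ∈ convexHull ℝ E) (hfz : f z = 0) :
    (∃ a ∈ E, 0 < f a) ∧ ∃ b ∈ E, f b < 0 := by
  refine ⟨?_, exists_neg_of_affine f hE hne hz hfz⟩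
  obtain ⟨a, ha, ha'⟩ := exists_neg_of_affine (-f) hE
    (fun y hy => by simpa using hne y hy) hz (by simpa using hfz)
  refine ⟨a, ha, ?_⟩
  have : -(f a) < 0 := by simpa using ha'
  linarith

/-- Metric characterization of the intrinsic interior. -/
lemma mem_intrinsicInterior_ball {N : ℕ} {s : Set (Pt N)} {x : Pt N} :
    x ∈ intrinsicInterior ℝ s ↔
      x ∈ affineSpan ℝ s ∧ ∃ ε > 0, ∀ y ∈ affineSpan ℝ s, dist y x < ε → y ∈ s := by
  constructor
  · rintro ⟨⟨x', hx'⟩, hx, rfl⟩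
    rw [mem_interior_iff_mem_nhds, Metric.mem_nhds_iff] at hx
    obtain ⟨ε, hε, hball⟩ := hx
    refine ⟨hx', ε, hε, fun y hy hyd => ?_⟩
    have hmem : (⟨y, hy⟩ : affineSpan ℝ s) ∈ Metric.ball (⟨x', hx'⟩ : affineSpan ℝ s) ε := by
      simpa [Metric.mem_ball, Subtype.dist_eq] using hyd
    exact hball hmem
  · rintro ⟨hxA, ε, hε, h⟩
    refine ⟨⟨x, hxA⟩, ?_, rfl⟩
    rw [mem_interior_iff_mem_nhds, Metric.mem_nhds_iff]
    exact ⟨ε, hε, fun y hy =>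
      h y y.2 (by simpa [Metric.mem_ball, Subtype.dist_eq] using hy)⟩

/-- Moving from a point of the intrinsic interior towards any point of a convex set,
one stays in the intrinsic interior. -/
lemma combo_mem_intrinsicInterior {N : ℕ} {s : Set (Pt N)} (hs : Convex ℝ s)
    {x e : Pt N} (hx : x ∈ intrinsicInterior ℝ s) (he : e ∈ s) {t : ℝ}
    (ht0 : 0 ≤ t) (ht1 : t < 1) : (1 - t) • x + t • e ∈ intrinsicInterior ℝ s := by
  rw [mem_intrinsicInterior_ball] at hx ⊢
  obtain ⟨hxA, ε, hε, hball⟩ := hx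
  have h1t : (0 : ℝ) < 1 - t := by linarith
  have heA : e ∈ affineSpan ℝ s := subset_affineSpan ℝ s he
  have hzA : (1 - t) • x + t • e ∈ affineSpan ℝ s := by
    have hmem := AffineMap.lineMap_mem t hxA heA
    have hline : AffineMap.lineMap x e t = (1 - t) • x + t • e := by
      simp only [AffineMap.lineMap_apply, vsub_eq_sub, vadd_eq_add]
      module
    rwa [hline] at hmem
  refine ⟨hzA, (1 - t) * ε, mul_pos h1t hε, ?_⟩
  intro y hyA hyd
  have hsub : y - ((1 - t) • x + t • e) ∈ (affineSpan ℝ s).direction := by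
    simpa [vsub_eq_sub] using AffineSubspace.vsub_mem_direction hyA hzA
  have hy'A : (1 - t)⁻¹ • (y - ((1 - t) • x + t • e)) + x ∈ affineSpan ℝ s := by
    have := AffineSubspace.vadd_mem_of_mem_direction
      (Submodule.smul_mem _ (1 - t)⁻¹ hsub) hxA
    simpa [vadd_eq_add] using this
  have hy's : (1 - t)⁻¹ • (y - ((1 - t) • x + t • e)) + x ∈ s := by
    apply hball _ hy'A
    have hd : dist ((1 - t)⁻¹ • (y - ((1 - t) • x + t • e)) + x) x
        = (1 - t)⁻¹ * dist y ((1 - t) • x + t • e) := by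
      rw [dist_eq_norm, dist_eq_norm, add_sub_cancel_right, norm_smul,
        Real.norm_eq_abs, abs_of_pos (inv_pos.2 h1t)]
    rw [hd]
    calc (1 - t)⁻¹ * dist y ((1 - t) • x + t • e)
        < (1 - t)⁻¹ * ((1 - t) * ε) := by
          exact mul_lt_mul_of_pos_left hyd (inv_pos.2 h1t)
      _ = ε := by field_simp
  have hyy : (1 - t) • ((1 - t)⁻¹ • (y - ((1 - t) • x + t • e)) + x) + t • e = y := by
    rw [smul_add, smul_inv_smul₀ h1t.ne']
    abel
  have := hs hy's he h1t.le ht0 (by ring)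
  rwa [hyy] at this

/-- An affine functional evaluated on a convex combination. -/
lemma affine_eval_combo {N : ℕ} (f : Pt N →ᵃ[ℝ] ℝ) (x y : Pt N) (s : ℝ) :
    f ((1 - s) • x + s • y) = (1 - s) * f x + s * f y := by
  have h : (1 - s) • x + s • y = AffineMap.lineMap x y s := by
    simp only [AffineMap.lineMap_apply, vsub_eq_sub, vadd_eq_add]
    module
  rw [h, AffineMap.apply_lineMap, AffineMap.lineMap_apply]
  simp only [vsub_eq_sub, vadd_eq_add, smul_eq_mul]
  ring

lemma cross_zero {u v : ℝ} (hu : u < 0) (hv : 0 < v) :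
    ∃ s : ℝ, 0 ≤ s ∧ s < 1 ∧ (1 - s) * u + s * v = 0 := by
  have h1 : u - v < 0 := by linarith
  have hne : u - v ≠ 0 := h1.ne
  refine ⟨u / (u - v), ?_, ?_, ?_⟩
  · exact (div_pos_iff.2 (Or.inr ⟨hu, h1⟩)).le
  · rw [div_lt_one_of_neg h1]
    linarith
  · field_simp
    ring

/-- Every extreme point of a polytope is an exposed point. -/
lemma extremePoint_isExposed {N : ℕ} {S : Set (Pt N)} (hS : S.Finite) {v : Pt N}
    (hv : v ∈ (convexHull ℝ S).extremePoints ℝ) : IsExposed ℝ (convexHull ℝ S) {v} := by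
  classical
  have hQconv : Convex ℝ (convexHull ℝ S) := convex_convexHull ℝ S
  have hvS : v ∈ S := extremePoints_convexHull_subset hv
  have hvnot : v ∉ convexHull ℝ (S \ {v}) := by
    rw [hQconv.mem_extremePoints_iff_mem_diff_convexHull_diff] at hv
    exact fun h => hv.2 (convexHull_mono (diff_subset_diff_left (subset_convexHull ℝ S)) h)
  have hcl : IsClosed (convexHull ℝ (S \ {v})) :=
    ((hS.subset diff_subset).isCompact_convexHull (𝕜 := ℝ)).isClosed
  obtain ⟨l, c, hlc, hcv⟩ :=
    geometric_hahn_banach_closed_point (convex_convexHull ℝ _) hcl hvnot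
  have hlS : ∀ y ∈ S, l y ≤ l v := by
    intro y hy
    rcases eq_or_ne y v with rfl | hne
    · exact le_refl _
    · exact ((hlc y (subset_convexHull ℝ _ ⟨hy, hne⟩)).trans hcv).le
  intro _
  refine ⟨l, ?_⟩
  apply Subset.antisymm
  · intro x hx
    have hxv : x = v := hx
    rw [hxv]
    refine ⟨subset_convexHull ℝ S hvS, fun y hy => ?_⟩
    have hsub : convexHull ℝ S ⊆ {x | l x ≤ l v} :=
      convexHull_min hlS (convex_halfSpace_le ⟨fun a b => map_add l a b,
        fun c a => map_smul l c a⟩ (l v))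
    exact hsub hy
  · rintro x ⟨hxQ, hmax⟩
    have hlvx : l v ≤ l x := hmax v (subset_convexHull ℝ S hvS)
    rw [hS.convexHull_eq] at hxQ
    obtain ⟨wt, hw0, hw1, hwx⟩ := hxQ
    have hvt : v ∈ hS.toFinset := hS.mem_toFinset.2 hvS
    have hkey : ∀ y ∈ hS.toFinset, y ≠ v → wt y = 0 := by
      intro y hyt hyv
      by_contra hwy
      have hwypos : 0 < wt y :=
        lt_of_le_of_ne (hw0 y (hS.mem_toFinset.1 hyt)) (Ne.symm hwy)
      have hx' : l x = ∑ u ∈ hS.toFinset, wt u * l u := by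
        rw [← hwx]
        exact affineMap_centerMass l.toLinearMap.toAffineMap _ wt hw1
      have hlt : ∑ u ∈ hS.toFinset, wt u * l u < ∑ u ∈ hS.toFinset, wt u * l v := by
        apply Finset.sum_lt_sum
        · intro i hi
          exact mul_le_mul_of_nonneg_left (hlS i (hS.mem_toFinset.1 hi))
            (hw0 i (hS.mem_toFinset.1 hi))
        · refine ⟨y, hyt, ?_⟩
          have hylt : l y < l v :=
            (hlc y (subset_convexHull ℝ _ ⟨hS.mem_toFinset.1 hyt, hyv⟩)).trans hcv
          exact mul_lt_mul_of_pos_left hylt hwypos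
      have hsum : ∑ u ∈ hS.toFinset, wt u * l v = l v := by
        rw [← Finset.sum_mul, hw1, one_mul]
      rw [hsum] at hlt
      rw [hx'] at hlvx
      linarith
    have hwv : wt v = 1 := by
      rw [← hw1]
      exact (Finset.sum_eq_single v (fun y hy hne => hkey y hy hne)
        (fun h => absurd hvt h)).symm
    have hxv : x = v := by
      rw [← hwx, Finset.centerMass_eq_of_sum_1 _ _ hw1,
        Finset.sum_eq_single v (fun y hy hne => by rw [hkey y hy hne, zero_smul])
          (fun h => absurd hvt h)]
      simp [hwv]
    exact hxv

/-- If `H` is a hyperplane containing no vertex of the polytope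
`Q` and `F` is a face of `Q` meeting `H`, then `F ⊄ H`, `H` meets the relative
interior of `F`, and `dim (F ∩ H) = dim F - 1`. -/
theorem dim_face_inter_hyperplane {N : ℕ} (Q H F : Set (Pt N))
    (hQ : IsPolytope Q) (hH : IsHyperplane H)
    (hv : ∀ v : Pt N, IsVertexOf Q v → v ∉ H)
    (hF : IsFaceOf Q F) (hFH : (F ∩ H).Nonempty) :
    ¬ F ⊆ H ∧ (H ∩ intrinsicInterior ℝ F).Nonempty ∧
      faceDim (F ∩ H) = faceDim F - 1 := by
  obtain ⟨S, hSfin, rfl⟩ := hQ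
  obtain ⟨f, hflin, rfl⟩ := hH
  obtain ⟨z, hzF, hzH⟩ := hFH
  have hzf : f z = 0 := hzH
  have hFexp : IsExposed ℝ (convexHull ℝ S) F := hF
  have hQconv : Convex ℝ (convexHull ℝ S) := convex_convexHull ℝ S
  have hQcomp : IsCompact (convexHull ℝ S) := hSfin.isCompact_convexHull (𝕜 := ℝ)
  have hFconv : Convex ℝ F := hFexp.convex hQconv
  have hFcomp : IsCompact F := hFexp.isCompact hQcomp
  have hFne : F.Nonempty := ⟨z, hzF⟩
  have hES : F.extremePoints ℝ ⊆ S := fun e he => extremePoints_convexHull_subset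
    (hFexp.isExtreme.extremePoints_subset_extremePoints he)
  have hEfin : (F.extremePoints ℝ).Finite := hSfin.subset hES
  have hEF : F.extremePoints ℝ ⊆ F := extremePoints_subset
  have hFE : F = convexHull ℝ (F.extremePoints ℝ) := by
    have h1 := closure_convexHull_extremePoints hFcomp hFconv
    rw [IsClosed.closure_eq (hEfin.isCompact_convexHull (𝕜 := ℝ)).isClosed] at h1
    exact h1.symm
  have hvert : ∀ e ∈ F.extremePoints ℝ, f e ≠ 0 := by
    intro e he
    have heQ : e ∈ (convexHull ℝ S).extremePoints ℝ :=
      hFexp.isExtreme.extremePoints_subset_extremePoints he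
    have hver : IsVertexOf (convexHull ℝ S) e := by
      refine ⟨extremePoint_isExposed hSfin heQ, ?_⟩
      rw [faceDim, if_neg (Set.singleton_ne_empty e), direction_affineSpan,
        vectorSpan_singleton]
      simp
    exact hv e hver
  obtain ⟨⟨a, haE, hfa⟩, ⟨b, hbE, hfb⟩⟩ :=
    exists_pos_and_neg f hEfin hvert (hFE ▸ hzF) hzf
  -- Part 1
  have hpart1 : ¬ F ⊆ {x | f x = 0} := fun hsub => hvert a haE (hsub (hEF haE))
  -- Part 2
  have hpart2 : ({x | f x = 0} ∩ intrinsicInterior ℝ F).Nonempty := by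
    obtain ⟨x0, hx0⟩ := hFne.intrinsicInterior hFconv
    rcases lt_trichotomy (f x0) 0 with hneg | hzero | hpos
    · obtain ⟨s, hs0, hs1, hsz⟩ := cross_zero hneg hfa
      refine ⟨(1 - s) • x0 + s • a, ?_,
        combo_mem_intrinsicInterior hFconv hx0 (hEF haE) hs0 hs1⟩
      show f _ = 0
      rw [affine_eval_combo]
      exact hsz
    · exact ⟨x0, hzero, hx0⟩
    · obtain ⟨s, hs0, hs1, hsz⟩ := cross_zero (neg_neg_iff_pos.2 hpos : -f x0 < 0)
        (by linarith : (0:ℝ) < -f b)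
      refine ⟨(1 - s) • x0 + s • b, ?_,
        combo_mem_intrinsicInterior hFconv hx0 (hEF hbE) hs0 hs1⟩
      show f _ = 0
      rw [affine_eval_combo]
      linarith
  -- Part 3
  obtain ⟨w, hwH, hwI⟩ := id hpart2
  have hwF : w ∈ F := intrinsicInterior_subset hwI
  have hwf : f w = 0 := hwH
  have hwA : w ∈ affineSpan ℝ F := subset_affineSpan ℝ F hwF
  obtain ⟨-, ε, hε, hball⟩ := mem_intrinsicInterior_ball.1 hwI
  have hdir : (affineSpan ℝ (F ∩ {x | f x = 0})).direction
      = (affineSpan ℝ F).direction ⊓ LinearMap.ker f.linear := by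
    apply le_antisymm
    · have hle : affineSpan ℝ (F ∩ {x | f x = 0}) ≤ AffineSubspace.mk' w
          ((affineSpan ℝ F).direction ⊓ LinearMap.ker f.linear) := by
        rw [affineSpan_le]
        rintro x ⟨hxF, hxH⟩
        rw [SetLike.mem_coe, AffineSubspace.mem_mk']
        refine Submodule.mem_inf.2
          ⟨AffineSubspace.vsub_mem_direction (subset_affineSpan ℝ F hxF) hwA, ?_⟩
        rw [LinearMap.mem_ker, AffineMap.linearMap_vsub]
        show f x - f w = 0
        rw [show f x = 0 from hxH, hwf]
        ring
      calc (affineSpan ℝ (F ∩ {x | f x = 0})).direction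
          ≤ (AffineSubspace.mk' w
            ((affineSpan ℝ F).direction ⊓ LinearMap.ker f.linear)).direction :=
            AffineSubspace.direction_le hle
        _ = _ := AffineSubspace.direction_mk' _ _
    · intro v hvD
      rcases eq_or_ne v 0 with rfl | hv0
      · exact Submodule.zero_mem _
      obtain ⟨hvA, hvk⟩ := Submodule.mem_inf.1 hvD
      have hvnorm : 0 < ‖v‖ := norm_pos_iff.2 hv0
      set tt := ε / (2 * ‖v‖) with htt
      have htt0 : 0 < tt := by positivity
      have hpA : tt • v + w ∈ affineSpan ℝ F := by
        have := AffineSubspace.vadd_mem_of_mem_direction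
          (Submodule.smul_mem _ tt hvA) hwA
        simpa [vadd_eq_add] using this
      have hpF : tt • v + w ∈ F := by
        apply hball _ hpA
        have heq : tt * ‖v‖ = ε / 2 := by
          rw [htt]
          field_simp
        rw [dist_eq_norm, add_sub_cancel_right, norm_smul, Real.norm_eq_abs,
          abs_of_pos htt0, heq]
        linarith
      have hpH : f (tt • v + w) = 0 := by
        have hmv : f (tt • v +ᵥ w) = f.linear (tt • v) +ᵥ f w := AffineMap.map_vadd f w _
        rw [vadd_eq_add] at hmv
        rw [hmv, map_smul, LinearMap.mem_ker.1 hvk, hwf]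
        simp
      have hwFH : w ∈ F ∩ {x | f x = 0} := ⟨hwF, hwf⟩
      have hpFH : tt • v + w ∈ F ∩ {x | f x = 0} := ⟨hpF, hpH⟩
      have hmem : (tt • v + w) -ᵥ w ∈ (affineSpan ℝ (F ∩ {x | f x = 0})).direction :=
        AffineSubspace.vsub_mem_direction (subset_affineSpan _ _ hpFH)
          (subset_affineSpan _ _ hwFH)
      have hvmem : v = tt⁻¹ • ((tt • v + w) -ᵥ w) := by
        rw [vsub_eq_sub, add_sub_cancel_right, smul_smul, inv_mul_cancel₀ htt0.ne',
          one_smul]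
      rw [hvmem]
      exact Submodule.smul_mem _ _ hmem
  set g : (affineSpan ℝ F).direction →ₗ[ℝ] ℝ :=
    f.linear.comp (affineSpan ℝ F).direction.subtype with hg
  have hgne : g ≠ 0 := by
    intro h0
    have haA : a ∈ affineSpan ℝ F := subset_affineSpan ℝ F (hEF haE)
    have hu : a -ᵥ w ∈ (affineSpan ℝ F).direction :=
      AffineSubspace.vsub_mem_direction haA hwA
    have hz0 : g ⟨a -ᵥ w, hu⟩ = 0 := by rw [h0]; rfl
    rw [hg] at hz0
    simp only [LinearMap.comp_apply, Submodule.coe_subtype] at hz0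
    rw [AffineMap.linearMap_vsub] at hz0
    rw [vsub_eq_sub, hwf, sub_zero] at hz0
    exact hvert a haE hz0
  have hker : (affineSpan ℝ F).direction ⊓ LinearMap.ker f.linear
      = (LinearMap.ker g).map (affineSpan ℝ F).direction.subtype := by
    ext x
    simp only [Submodule.mem_inf, Submodule.mem_map, LinearMap.mem_ker, hg,
      LinearMap.comp_apply, Submodule.coe_subtype]
    constructor
    · rintro ⟨hx1, hx2⟩
      exact ⟨⟨x, hx1⟩, hx2, rfl⟩
    · rintro ⟨⟨y, hy⟩, hy2, rfl⟩
      exact ⟨hy, hy2⟩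
  have hrank : Module.finrank ℝ (LinearMap.ker g) + 1
      = Module.finrank ℝ (affineSpan ℝ F).direction :=
    Module.Dual.finrank_ker_add_one_of_ne_zero hgne
  have hDrank : Module.finrank ℝ
      ((affineSpan ℝ F).direction ⊓ LinearMap.ker f.linear : Submodule ℝ (Pt N))
      = Module.finrank ℝ (LinearMap.ker g) := by
    rw [hker]
    exact Submodule.finrank_map_subtype_eq _ _
  have hFHne2 : (F ∩ {x | f x = 0}) ≠ ∅ := Set.Nonempty.ne_empty ⟨z, hzF, hzf⟩
  refine ⟨hpart1, hpart2, ?_⟩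
  rw [faceDim, faceDim, if_neg hFHne2, if_neg hFne.ne_empty, hdir, hDrank, ← hrank]
  push_cast
  ring
end

section
/- Let Q be a polytope and H an affine hyperplane intersecting Q but containing no vertex of Q. If F is a face of Q that meets H, then F ∩ H is a face of the polytope Q ∩ H; indeed, any supporting hyperplane exposing F in Q also exposes F ∩ H in Q ∩ H. -/
open Set Classical

/-- If `H` is a hyperplane meeting the polytope `Q` but no
vertex of `Q`, and `F` is a face of `Q` meeting `H`, then `F ∩ H` is a face of
`Q ∩ H`; indeed any linear functional exposing `F` in `Q` exposes `F ∩ H` in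
`Q ∩ H`. -/
theorem face_inter_hyperplane_is_face {N : ℕ} (Q H F : Set (Pt N))
    (hQ : IsPolytope Q) (hH : IsHyperplane H) (hQH : (Q ∩ H).Nonempty)
    (hv : ∀ v : Pt N, IsVertexOf Q v → v ∉ H)
    (hF : IsFaceOf Q F) (hFH : (F ∩ H).Nonempty) :
    IsFaceOf (Q ∩ H) (F ∩ H) ∧
    ∀ l : Pt N →L[ℝ] ℝ, F = {x ∈ Q | ∀ y ∈ Q, l y ≤ l x} →
      F ∩ H = {x ∈ Q ∩ H | ∀ y ∈ Q ∩ H, l y ≤ l x} := by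
  obtain ⟨z, hzF, hzH⟩ := hFH
  have key : ∀ l : Pt N →L[ℝ] ℝ, F = {x ∈ Q | ∀ y ∈ Q, l y ≤ l x} →
      F ∩ H = {x ∈ Q ∩ H | ∀ y ∈ Q ∩ H, l y ≤ l x} := by
    intro l hl
    have hz : z ∈ Q ∧ ∀ y ∈ Q, l y ≤ l z := by rw [hl] at hzF; exact hzF
    ext x
    constructor
    · rintro ⟨hxF, hxH⟩
      rw [hl] at hxF
      exact ⟨⟨hxF.1, hxH⟩, fun y hy => hxF.2 y hy.1⟩
    · rintro ⟨⟨hxQ, hxH⟩, hmax⟩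
      refine ⟨?_, hxH⟩
      rw [hl]
      exact ⟨hxQ, fun y hy => (hz.2 y hy).trans (hmax z ⟨hz.1, hzH⟩)⟩
  refine ⟨fun _ => ?_, key⟩
  obtain ⟨l, hl⟩ := hF ⟨z, hzF⟩
  exact ⟨l, key l hl⟩
end

section
/- Let F and G be two distinct k-faces of a polytope Q with k ≥ 1, let f and g be points in the relative interiors of F and G respectively, let L be the affine line through f and g, and let Q′ be the smallest face of Q containing F ∪ G. Then L ∩ Q ⊆ Q′, and L meets the relative boundary of Q′ only at the two points f and g; consequently L ∩ Q equals the segment [f, g]. -/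
open Set Classical

section Auxiliary

open Pointwise

variable {N : ℕ}

/-- Metric characterization of the intrinsic interior. -/
lemma mem_relint_iff {s : Set (Pt N)} {x : Pt N} :
    x ∈ intrinsicInterior ℝ s ↔ ∃ _hx : x ∈ affineSpan ℝ s, ∃ ε > 0,
      ∀ y ∈ affineSpan ℝ s, dist y x < ε → y ∈ s := by
  constructor
  · rintro ⟨y, hy, rfl⟩
    refine ⟨y.2, ?_⟩
    rw [mem_interior_iff_mem_nhds, Metric.mem_nhds_iff] at hy
    obtain ⟨ε, hε, hball⟩ := hy
    exact ⟨ε, hε, fun z hz hdist => hball (show (⟨z, hz⟩ : affineSpan ℝ s) ∈ Metric.ball y ε by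
      simpa [Metric.mem_ball, Subtype.dist_eq] using hdist)⟩
  · rintro ⟨hx, ε, hε, h⟩
    refine ⟨⟨x, hx⟩, ?_, rfl⟩
    rw [mem_interior_iff_mem_nhds, Metric.mem_nhds_iff]
    exact ⟨ε, hε, fun z hz => h z z.2 (by simpa [Metric.mem_ball, Subtype.dist_eq] using hz)⟩

/-- A relative interior point of `s` can be pushed past any point of `s`. -/
lemma relint_extend {s : Set (Pt N)} {x y : Pt N} (hx : x ∈ intrinsicInterior ℝ s)
    (hy : y ∈ s) : ∃ z ∈ s, x ∈ openSegment ℝ y z := by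
  obtain ⟨hxspan, ε, hε, hball⟩ := mem_relint_iff.1 hx
  have hxs : x ∈ s := hball x hxspan (by simpa using hε)
  by_cases hxy : x = y
  · refine ⟨x, hxs, ?_⟩
    rw [hxy, openSegment_same]
    exact rfl
  · have hxy' : (0:ℝ) < ‖x - y‖ := by
      rw [norm_pos_iff]
      exact sub_ne_zero.2 hxy
    set δ : ℝ := ε / (2 * ‖x - y‖) with hδdef
    have hδ : 0 < δ := by positivity
    set z := AffineMap.lineMap (k := ℝ) y x (1 + δ) with hzdef
    have hzspan : z ∈ affineSpan ℝ s :=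
      AffineMap.lineMap_mem _ (mem_affineSpan ℝ hy) hxspan
    have hzx : z - x = δ • (x - y) := by
      rw [hzdef, AffineMap.lineMap_apply_module']
      module
    have hzdist : dist z x < ε := by
      rw [dist_eq_norm, hzx, norm_smul, Real.norm_eq_abs, abs_of_pos hδ, hδdef]
      rw [div_mul_eq_mul_div, div_lt_iff₀ (by positivity)]
      nlinarith
    have hzs : z ∈ s := hball z hzspan hzdist
    refine ⟨z, hzs, ?_⟩
    rw [openSegment_eq_image_lineMap]
    refine ⟨1/(1+δ), ⟨by positivity, by rw [div_lt_one (by positivity)]; linarith⟩, ?_⟩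
    have hzy : z - y = (1+δ) • (x - y) := by
      rw [hzdef, AffineMap.lineMap_apply_module']; module
    rw [AffineMap.lineMap_apply_module', hzy, smul_smul]
    rw [one_div, inv_mul_cancel₀ (by positivity)]
    module

/-- A convex set with a relative interior point in an extreme subset is contained in it. -/
lemma extreme_absorb {Q G C : Set (Pt N)} {x : Pt N} (hG : IsExtreme ℝ Q G)
    (hCQ : C ⊆ Q) (hxG : x ∈ G) (hx : x ∈ intrinsicInterior ℝ C) : C ⊆ G := by
  intro y hy
  obtain ⟨z, hz, hseg⟩ := relint_extend hx hy
  exact hG.2 (hCQ hy) (hCQ hz) hxG hseg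

/-- A linear functional attaining its maximum over `C` at a relative interior point
is constant on `C`. -/
lemma max_relint_const {C : Set (Pt N)} {l : Pt N →L[ℝ] ℝ} {x : Pt N}
    (hx : x ∈ intrinsicInterior ℝ C) (hmax : ∀ y ∈ C, l y ≤ l x) :
    ∀ y ∈ C, l y = l x := by
  intro y hy
  obtain ⟨z, hz, hseg⟩ := relint_extend hx hy
  obtain ⟨a, b, ha, hb, hab, hcomb⟩ := hseg
  have hlx : l x = a * l y + b * l z := by
    rw [← hcomb]; simp [mul_comm]
  have hly := hmax y hy
  have hlz := hmax z hz
  by_contra h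
  have hly' : l y < l x := lt_of_le_of_ne hly h
  have h1 : a * l y < a * l x := by nlinarith
  have h2 : b * l z ≤ b * l x := by nlinarith
  have h3 : a * l x + b * l x = l x := by rw [← add_mul, hab, one_mul]
  linarith

lemma span_eq_of_dim_eq {C D : Set (Pt N)} (hCD : C ⊆ D) (hne : C.Nonempty)
    (hdim : faceDim C = faceDim D) : affineSpan ℝ C = affineSpan ℝ D := by
  have hCne : C ≠ ∅ := hne.ne_empty
  have hDne : D ≠ ∅ := (hne.mono hCD).ne_empty
  rw [faceDim, faceDim, if_neg hCne, if_neg hDne, Nat.cast_inj] at hdim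
  have hle : affineSpan ℝ C ≤ affineSpan ℝ D := affineSpan_mono ℝ hCD
  have hdir : (affineSpan ℝ C).direction = (affineSpan ℝ D).direction :=
    Submodule.eq_of_le_of_finrank_eq (AffineSubspace.direction_le hle) hdim
  obtain ⟨x, hx⟩ := hne
  exact AffineSubspace.ext_of_direction_eq hdir
    ⟨x, mem_affineSpan ℝ hx, hle (mem_affineSpan ℝ hx)⟩

lemma relint_mono_of_span_eq {C D : Set (Pt N)} (hCD : C ⊆ D)
    (hspan : affineSpan ℝ C = affineSpan ℝ D) :
    intrinsicInterior ℝ C ⊆ intrinsicInterior ℝ D := by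
  intro x hx
  obtain ⟨hxspan, ε, hε, hball⟩ := mem_relint_iff.1 hx
  rw [mem_relint_iff]
  rw [hspan] at hxspan hball
  exact ⟨hxspan, ε, hε, fun y hy hd => hCD (hball y hy hd)⟩

/-- Two nested `k`-faces coincide. -/
lemma kface_eq_of_subset {Q C D : Set (Pt N)} {k : ℕ}
    (hC : IsKFaceOf k Q C) (hD : IsKFaceOf k Q D) (hCD : C ⊆ D)
    (hne : (intrinsicInterior ℝ C).Nonempty) : C = D := by
  obtain ⟨x, hx⟩ := hne
  have hxC : x ∈ C := intrinsicInterior_subset hx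
  have hspan : affineSpan ℝ C = affineSpan ℝ D :=
    span_eq_of_dim_eq hCD ⟨x, hxC⟩ (hC.2.trans hD.2.symm)
  have hxD : x ∈ intrinsicInterior ℝ D := relint_mono_of_span_eq hCD hspan hx
  have hDC : D ⊆ C := extreme_absorb hC.1.isExtreme hD.1.subset hxC hxD
  exact le_antisymm hCD hDC

/-- Supporting functional at a non–relative-interior point of a convex set. -/
lemma exists_support {C : Set (Pt N)} {x : Pt N} (hC : Convex ℝ C) (hxC : x ∈ C)
    (hx : x ∉ intrinsicInterior ℝ C) :
    ∃ l : Pt N →L[ℝ] ℝ, (∀ y ∈ C, l y ≤ l x) ∧ ∃ y ∈ C, l y < l x := by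
  set V := (affineSpan ℝ C).direction with hVdef
  set D := C + ((Vᗮ : Submodule ℝ (Pt N)) : Set (Pt N)) with hDdef
  have hD : Convex ℝ D := hC.add Vᗮ.convex
  have hCD : C ⊆ D := fun y hy => ⟨y, hy, 0, Vᗮ.zero_mem, add_zero y⟩
  have hrelint_sub : ∀ w ∈ intrinsicInterior ℝ C, w ∈ interior D := by
    intro w hw
    obtain ⟨hwspan, ε, hε, hball⟩ := mem_relint_iff.1 hw
    rw [mem_interior_iff_mem_nhds, Metric.mem_nhds_iff]
    refine ⟨ε, hε, fun z hz => ?_⟩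
    set d : Pt N := (V.orthogonalProjectionOnto (z - w) : Pt N) with hd
    have hdV : d ∈ V := SetLike.coe_mem _
    have hy : w + d ∈ affineSpan ℝ C := by
      have := AffineSubspace.vadd_mem_of_mem_direction hdV hwspan
      simpa [vadd_eq_add, add_comm] using this
    have hdn : ‖d‖ ≤ ‖z - w‖ := by
      calc ‖d‖ ≤ ‖V.orthogonalProjectionOnto‖ * ‖z - w‖ :=
            (V.orthogonalProjectionOnto).le_opNorm _
        _ ≤ 1 * ‖z - w‖ :=
            mul_le_mul_of_nonneg_right (V.orthogonalProjectionOnto_norm_le) (norm_nonneg _)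
        _ = ‖z - w‖ := one_mul _
    have hyC : w + d ∈ C := by
      refine hball _ hy ?_
      rw [dist_eq_norm]
      have : w + d - w = d := by abel
      rw [this]
      calc ‖d‖ ≤ ‖z - w‖ := hdn
        _ = dist z w := (dist_eq_norm z w).symm
        _ < ε := hz
    refine ⟨w + d, hyC, z - w - d, ?_, by module⟩
    have := Submodule.sub_starProjection_mem_orthogonal (K := V) (z - w)
    exact this
  obtain ⟨w, hw⟩ := Set.Nonempty.intrinsicInterior hC ⟨x, hxC⟩
  have hwD : w ∈ interior D := hrelint_sub w hw
  have hxD : x ∉ interior D := by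
    intro hxint
    apply hx
    rw [mem_interior_iff_mem_nhds, Metric.mem_nhds_iff] at hxint
    obtain ⟨ε, hε, hball⟩ := hxint
    rw [mem_relint_iff]
    refine ⟨mem_affineSpan ℝ hxC, ε, hε, fun y hyspan hyd => ?_⟩
    obtain ⟨c, hc, p, hp, hcp⟩ := hball (show y ∈ Metric.ball x ε by simpa [Metric.mem_ball])
    have hyc : y - c ∈ V := by
      have := AffineSubspace.vsub_mem_direction hyspan (mem_affineSpan ℝ hc)
      simpa using this
    have hyc' : y - c ∈ Vᗮ := by
      have : y - c = p := by rw [← hcp]; module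
      rwa [this]
    have : y - c = 0 := Submodule.disjoint_def.1 V.orthogonal_disjoint _ hyc hyc'
    have : y = c := by rwa [sub_eq_zero] at this
    rwa [this]
  obtain ⟨l, hl⟩ := geometric_hahn_banach_open_point hD.interior isOpen_interior hxD
  refine ⟨l, ?_, w, intrinsicInterior_subset hw, hl w hwD⟩
  intro y hy
  by_contra hcon
  push_neg at hcon
  have hlw : l w < l x := hl w hwD
  have hylw : (0:ℝ) < l y - l w := by linarith
  set q : ℝ := (l x - l w) / (l y - l w) with hq
  have hq0 : 0 < q := div_pos (by linarith) hylw
  have hq1 : q < 1 := (div_lt_one hylw).2 (by linarith)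
  set t : ℝ := (q + 1) / 2 with ht
  have ht0 : 0 < t := by positivity
  have ht1 : t < 1 := by rw [ht]; linarith
  have hqt : q < t := by rw [ht]; linarith
  have hp : (1 - t) • w + t • y ∈ interior D :=
    hD.combo_interior_closure_mem_interior hwD (subset_closure (hCD hy))
      (by linarith) (by linarith) (by ring)
  have hlt := hl _ hp
  rw [map_add, map_smul, map_smul, smul_eq_mul, smul_eq_mul] at hlt
  have key : l x - l w < t * (l y - l w) := by
    calc l x - l w = q * (l y - l w) := by rw [hq]; field_simp
      _ < t * (l y - l w) := mul_lt_mul_of_pos_right hqt hylw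
  nlinarith

end Auxiliary

/-- For distinct `k`-faces `F, G` (`k ≥ 1`) of a polytope `Q`,
relative interior points `f ∈ F`, `g ∈ G`, the line `L` through `f` and `g`, and
the smallest face `Q'` of `Q` containing `F ∪ G`: `L ∩ Q ⊆ Q'`, `L` meets the
relative boundary of `Q'` exactly at `f` and `g`, and `L ∩ Q = [f, g]`. -/
theorem line_through_relint_points {N k : ℕ} (Q F G Q' : Set (Pt N)) (f g : Pt N)
    (hQ : IsPolytope Q) (hk : 1 ≤ k)
    (hF : IsKFaceOf k Q F) (hG : IsKFaceOf k Q G) (hFG : F ≠ G)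
    (hf : f ∈ intrinsicInterior ℝ F) (hg : g ∈ intrinsicInterior ℝ G)
    (hQ'face : IsFaceOf Q Q') (hQ'sub : F ∪ G ⊆ Q')
    (hQ'min : ∀ T : Set (Pt N), IsFaceOf Q T → F ∪ G ⊆ T → Q' ⊆ T) :
    (affineSpan ℝ {f, g} : Set (Pt N)) ∩ Q ⊆ Q' ∧
    (affineSpan ℝ {f, g} : Set (Pt N)) ∩ (Q' \ intrinsicInterior ℝ Q') = {f, g} ∧
    (affineSpan ℝ {f, g} : Set (Pt N)) ∩ Q = segment ℝ f g := by
  obtain ⟨S, hSfin, hQS⟩ := hQ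
  have hQconv : Convex ℝ Q := hQS ▸ convex_convexHull ℝ S
  have hSQ : S ⊆ Q := hQS ▸ subset_convexHull ℝ S
  have hfF : f ∈ F := intrinsicInterior_subset hf
  have hgG : g ∈ G := intrinsicInterior_subset hg
  have hFQ' : F ⊆ Q' := fun y hy => hQ'sub (Or.inl hy)
  have hGQ' : G ⊆ Q' := fun y hy => hQ'sub (Or.inr hy)
  have hQ'Q : Q' ⊆ Q := hQ'face.subset
  have hFQ : F ⊆ Q := hF.1.subset
  have hGQ : G ⊆ Q := hG.1.subset
  have hfQ' : f ∈ Q' := hFQ' hfF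
  have hgQ' : g ∈ Q' := hGQ' hgG
  have hfQ : f ∈ Q := hQ'Q hfQ'
  have hgQ : g ∈ Q := hQ'Q hgQ'
  have hQ'conv : Convex ℝ Q' := hQ'face.convex hQconv
  have hQ'ext : IsExtreme ℝ Q Q' := hQ'face.isExtreme
  have hFext : IsExtreme ℝ Q F := hF.1.isExtreme
  have hGext : IsExtreme ℝ Q G := hG.1.isExtreme
  -- parametrize points on the line
  have hparam : ∀ x ∈ (affineSpan ℝ {f, g} : Set (Pt N)),
      ∃ t : ℝ, x = AffineMap.lineMap f g t := by
    intro x hx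
    have hx' : x ∈ affineSpan ℝ ({f, g} : Set (Pt N)) := hx
    have hdir : x - f ∈ (affineSpan ℝ ({f, g} : Set (Pt N))).direction := by
      have := AffineSubspace.vsub_mem_direction hx' (left_mem_affineSpan_pair ℝ f g)
      simpa using this
    rw [direction_affineSpan, vectorSpan_pair_rev] at hdir
    obtain ⟨t, ht⟩ := Submodule.mem_span_singleton.1 hdir
    refine ⟨t, ?_⟩
    rw [AffineMap.lineMap_apply_module']
    have : (g - f : Pt N) = g -ᵥ f := rfl
    rw [this, ht]
    module
  -- points of the line beyond the parameter `1` put `g` strictly between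
  have hbeyond : ∀ t : ℝ, 1 < t → g ∈ openSegment ℝ f (AffineMap.lineMap f g t) := by
    intro t ht
    rw [openSegment_eq_image_lineMap]
    refine ⟨1/t, ⟨div_pos one_pos (by linarith), by rw [div_lt_one (by linarith)]; linarith⟩, ?_⟩
    rw [AffineMap.lineMap_apply_module', AffineMap.lineMap_apply_module']
    have h1 : (t • (g - f) + f) - f = t • (g - f) := by abel
    rw [h1, smul_smul, one_div, inv_mul_cancel₀ (by linarith), one_smul]
    abel
  have hbefore : ∀ t : ℝ, t < 0 → f ∈ openSegment ℝ (AffineMap.lineMap f g t) g := by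
    intro t ht
    rw [openSegment_eq_image_lineMap]
    have h1t : (0:ℝ) < 1 - t := by linarith
    refine ⟨-t/(1-t), ⟨div_pos (by linarith) h1t, by rw [div_lt_one h1t]; linarith⟩, ?_⟩
    rw [AffineMap.lineMap_apply_module', AffineMap.lineMap_apply_module']
    have h1 : (g - (t • (g - f) + f)) = (1 - t) • (g - f) := by module
    rw [h1, smul_smul, div_mul_cancel₀ _ (ne_of_gt h1t)]
    module
  -- Claim 1: L ∩ Q ⊆ Q'
  have claim1 : (affineSpan ℝ {f, g} : Set (Pt N)) ∩ Q ⊆ Q' := by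
    rintro x ⟨hxL, hxQ⟩
    obtain ⟨t, rfl⟩ := hparam x hxL
    rcases lt_or_ge t 0 with ht | ht
    · exact hQ'ext.2 hxQ hgQ hfQ' (hbefore t ht)
    · rcases le_or_gt t 1 with ht1 | ht1
      · have : AffineMap.lineMap f g t ∈ segment ℝ f g := by
          rw [segment_eq_image_lineMap]
          exact ⟨t, ⟨ht, ht1⟩, rfl⟩
        exact hQ'conv.segment_subset hfQ' hgQ' this
      · exact hQ'ext.right_mem_of_mem_openSegment hfQ hxQ hgQ' (hbeyond t ht1)
  -- Claim 3 (⊆): L ∩ Q ⊆ [f, g]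
  have claim3sub : (affineSpan ℝ {f, g} : Set (Pt N)) ∩ Q ⊆ segment ℝ f g := by
    rintro x ⟨hxL, hxQ⟩
    obtain ⟨t, rfl⟩ := hparam x hxL
    rcases lt_or_ge t 0 with ht | ht
    · exfalso
      have hgF : g ∈ F := hFext.right_mem_of_mem_openSegment hxQ hgQ hfF (hbefore t ht)
      have hGF : G ⊆ F := extreme_absorb hFext hGQ hgF hg
      exact hFG (kface_eq_of_subset hG hF hGF ⟨g, hg⟩).symm
    · rcases le_or_gt t 1 with ht1 | ht1
      · rw [segment_eq_image_lineMap]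
        exact ⟨t, ⟨ht, ht1⟩, rfl⟩
      · exfalso
        have hfG : f ∈ G := hGext.2 hfQ hxQ hgG (hbeyond t ht1)
        have hFG' : F ⊆ G := extreme_absorb hGext hFQ hfG hf
        exact hFG (kface_eq_of_subset hF hG hFG' ⟨f, hf⟩)
  have claim3sup : segment ℝ f g ⊆ (affineSpan ℝ {f, g} : Set (Pt N)) ∩ Q := by
    intro x hx
    refine ⟨?_, hQconv.segment_subset hfQ hgQ hx⟩
    rw [segment_eq_image_lineMap] at hx
    obtain ⟨t, _, rfl⟩ := hx
    exact AffineMap.lineMap_mem_affineSpan_pair t f g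
  have claim3 : (affineSpan ℝ {f, g} : Set (Pt N)) ∩ Q = segment ℝ f g :=
    le_antisymm claim3sub claim3sup
  -- f and g are not in the relative interior of Q'
  have hfnot : f ∉ intrinsicInterior ℝ Q' := by
    intro h
    have hQ'F : Q' ⊆ F := extreme_absorb hFext hQ'Q hfF h
    have hGF : G ⊆ F := hGQ'.trans hQ'F
    exact hFG (kface_eq_of_subset hG hF hGF ⟨g, hg⟩).symm
  have hgnot : g ∉ intrinsicInterior ℝ Q' := by
    intro h
    have hQ'G : Q' ⊆ G := extreme_absorb hGext hQ'Q hgG h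
    have hFG' : F ⊆ G := hFQ'.trans hQ'G
    exact hFG (kface_eq_of_subset hF hG hFG' ⟨f, hf⟩)
  -- Key: open segment points are in the relative interior of Q'
  have key : ∀ x ∈ openSegment ℝ f g, x ∈ Q' → x ∈ intrinsicInterior ℝ Q' := by
    intro x hxseg hxQ'
    by_contra hxnot
    obtain ⟨l, hlmax, y₀, hy₀Q', hy₀lt⟩ := exists_support hQ'conv hxQ' hxnot
    obtain ⟨a, b, ha, hb, hab, hcomb⟩ := hxseg
    have hcx : l x = a * l f + b * l g := by
      rw [← hcomb]; simp [mul_comm]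
    have h3 : a * l x + b * l x = l x := by rw [← add_mul, hab, one_mul]
    have hlf : l f = l x := by
      by_contra h
      have h1 : l f < l x := lt_of_le_of_ne (hlmax f hfQ') h
      have h2 : a * l f < a * l x := by nlinarith
      have h4 : b * l g ≤ b * l x := by nlinarith [hlmax g hgQ']
      linarith
    have hlg : l g = l x := by
      by_contra h
      have h1 : l g < l x := lt_of_le_of_ne (hlmax g hgQ') h
      have h2 : b * l g < b * l x := by nlinarith
      have h4 : a * l f ≤ a * l x := by nlinarith [hlmax f hfQ']
      linarith
    have hlF : ∀ y ∈ F, l y = l x := by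
      intro y hy
      rw [← hlf]
      exact max_relint_const hf (fun z hz => hlf ▸ hlmax z (hFQ' hz)) y hy
    have hlG : ∀ y ∈ G, l y = l x := by
      intro y hy
      rw [← hlg]
      exact max_relint_const hg (fun z hz => hlg ▸ hlmax z (hGQ' hz)) y hy
    obtain ⟨l₀, hl₀⟩ := hQ'face ⟨x, hxQ'⟩
    have hQ'mem : ∀ y, y ∈ Q' ↔ y ∈ Q ∧ ∀ z ∈ Q, l₀ z ≤ l₀ y := fun y => by
      rw [hl₀]; exact Iff.rfl
    have hl₀const : ∀ y ∈ Q', l₀ y = l₀ f := fun y hy =>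
      le_antisymm (((hQ'mem f).1 hfQ').2 y (hQ'Q hy)) (((hQ'mem y).1 hy).2 f hfQ)
    have hl₀S : ∀ s ∈ S, l₀ s ≤ l₀ f := fun s hs => ((hQ'mem f).1 hfQ').2 s (hSQ hs)
    -- if `l₀` is maximal at `s` then `s ∈ Q'` and hence `l s ≤ l x`
    have hstrict : ∀ s ∈ S, l x < l s → l₀ s < l₀ f := by
      intro s hs hls
      rcases lt_or_eq_of_le (hl₀S s hs) with h | h
      · exact h
      · exfalso
        have hsQ' : s ∈ Q' := (hQ'mem s).2 ⟨hSQ hs, fun z hz => h ▸ ((hQ'mem f).1 hfQ').2 z hz⟩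
        exact absurd (hlmax s hsQ') (not_le.2 hls)
    -- choose ε > 0 uniformly over the finite set S
    have hSne : S.Nonempty := by
      by_contra h
      rw [not_nonempty_iff_eq_empty] at h
      rw [h, convexHull_empty] at hQS
      exact absurd (hQ'Q hxQ') (hQS ▸ notMem_empty x)
    set φ : Pt N → ℝ := fun s =>
      if l x < l s then (l₀ f - l₀ s) / (2 * (l s - l x)) else 1 with hφ
    set ε : ℝ := hSfin.toFinset.inf' (by rwa [Set.Finite.toFinset_nonempty]) φ with hε
    have hφpos : ∀ s ∈ S, 0 < φ s := by
      intro s hs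
      simp only [hφ]
      split_ifs with hls
      · have := hstrict s hs hls
        have h2 : (0:ℝ) < 2 * (l s - l x) := by linarith
        exact div_pos (by linarith) h2
      · norm_num
    have hεpos : 0 < ε := by
      rw [hε, Finset.lt_inf'_iff]
      intro s hs
      exact hφpos s ((Set.Finite.mem_toFinset hSfin).1 hs)
    have hεkey : ∀ s ∈ S, l₀ s + ε * l s ≤ l₀ f + ε * l x := by
      intro s hs
      by_cases hls : l x < l s
      · have hεle : ε ≤ φ s := Finset.inf'_le φ ((Set.Finite.mem_toFinset hSfin).2 hs)
        simp only [hφ, if_pos hls] at hεle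
        have h2 : (0:ℝ) < 2 * (l s - l x) := by linarith
        have h5 := (le_div_iff₀ h2).1 hεle
        have h6 : 0 < ε * (l s - l x) := mul_pos hεpos (by linarith)
        nlinarith
      · push_neg at hls
        have h1 := hl₀S s hs
        nlinarith
    set l₁ : Pt N →L[ℝ] ℝ := l₀ + ε • l with hl₁def
    have hl₁ : ∀ y, l₁ y = l₀ y + ε * l y := fun y => by
      rw [hl₁def]; simp
    have hhull : ∀ z ∈ Q, l₁ z ≤ l₀ f + ε * l x := by
      intro z hz
      rw [hQS] at hz
      have hsub : convexHull ℝ S ⊆ {w : Pt N | l₁ w ≤ l₀ f + ε * l x} :=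
        convexHull_min (fun s hs => by rw [mem_setOf_eq, hl₁]; exact hεkey s hs)
          (convex_halfSpace_le ⟨l₁.map_add, l₁.map_smul⟩ _)
      exact hsub hz
    set T : Set (Pt N) := {y ∈ Q | ∀ z ∈ Q, l₁ z ≤ l₁ y} with hT
    have hTface : IsFaceOf Q T := fun _ => ⟨l₁, rfl⟩
    have hFGT : F ∪ G ⊆ T := by
      rintro y (hy | hy) <;>
      · refine ⟨hQ'Q (hQ'sub (by first | exact Or.inl hy | exact Or.inr hy)), fun z hz => ?_⟩
        have hly : l₁ y = l₀ f + ε * l x := by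
          rw [hl₁]
          first
          | rw [hl₀const y (hFQ' hy), hlF y hy]
          | rw [hl₀const y (hGQ' hy), hlG y hy]
        rw [hly]
        exact hhull z hz
    have hy₀T : y₀ ∈ T := hQ'min T hTface hFGT hy₀Q'
    have hcontr := hy₀T.2 f hfQ
    rw [hl₁, hl₁, hl₀const y₀ hy₀Q', hlf] at hcontr
    nlinarith
  -- Claim 2
  have claim2 : (affineSpan ℝ {f, g} : Set (Pt N)) ∩ (Q' \ intrinsicInterior ℝ Q') = {f, g} := by
    apply Set.eq_of_subset_of_subset
    · rintro x ⟨hxL, hxQ', hxnot⟩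
      by_contra hxfg
      rw [Set.mem_insert_iff, Set.mem_singleton_iff] at hxfg
      push_neg at hxfg
      have hxseg : x ∈ segment ℝ f g := claim3sub ⟨hxL, hQ'Q hxQ'⟩
      rw [segment_eq_image_lineMap] at hxseg
      obtain ⟨t, ⟨ht0, ht1⟩, rfl⟩ := hxseg
      have ht0' : t ≠ 0 := by
        intro h
        rw [h, AffineMap.lineMap_apply_zero] at hxfg
        exact hxfg.1 rfl
      have ht1' : t ≠ 1 := by
        intro h
        rw [h, AffineMap.lineMap_apply_one] at hxfg
        exact hxfg.2 rfl
      have hxopen : AffineMap.lineMap f g t ∈ openSegment ℝ f g := by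
        rw [openSegment_eq_image_lineMap]
        exact ⟨t, ⟨lt_of_le_of_ne ht0 (Ne.symm ht0'), lt_of_le_of_ne ht1 ht1'⟩, rfl⟩
      exact hxnot (key _ hxopen hxQ')
    · rintro x hx
      rw [Set.mem_insert_iff, Set.mem_singleton_iff] at hx
      rcases hx with h | h
      · rw [h]; exact ⟨left_mem_affineSpan_pair ℝ f g, hfQ', hfnot⟩
      · rw [h]; exact ⟨right_mem_affineSpan_pair ℝ f g, hgQ', hgnot⟩
  exact ⟨claim1, claim2, claim3⟩
end

section
/- Let F and G be two distinct k-faces of a polytope Q with k ≥ 1, let f and g be points in the relative interiors of F and G respectively, and let L be the affine line through f and g. Then L does not meet any face of Q of dimension at most k other than F and G; in particular, for any k-face R of Q distinct from F and G, L ∩ R = ∅, and L contains no vertex of Q. -/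
open Set Classical

/-- From a relative interior point one can extend a little beyond, staying in the set,
in the direction away from any point of the affine span. -/
lemma extend_beyond {N : ℕ} {F : Set (Pt N)} {x y : Pt N}
    (hx : x ∈ intrinsicInterior ℝ F) (hy : y ∈ affineSpan ℝ F) :
    ∃ ε : ℝ, 0 < ε ∧ x + ε • (x - y) ∈ F := by
  obtain ⟨x', hx', hxx⟩ := hx
  rw [mem_interior_iff_mem_nhds, nhds_induced, Filter.mem_comap] at hx'
  obtain ⟨t, ht, hts⟩ := hx'
  rw [hxx] at ht
  obtain ⟨δ, hδ, hball⟩ := Metric.mem_nhds_iff.mp ht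
  have hxF : x ∈ affineSpan ℝ F := hxx ▸ x'.2
  set ε : ℝ := δ / (2 * (‖x - y‖ + 1)) with hε
  have hnorm : (0:ℝ) < ‖x - y‖ + 1 := by positivity
  have hεpos : 0 < ε := by positivity
  refine ⟨ε, hεpos, ?_⟩
  have hz : x + ε • (x - y) ∈ affineSpan ℝ F := by
    have := (affineSpan ℝ F).smul_vsub_vadd_mem ε hxF hy hxF
    simpa [vsub_eq_sub, vadd_eq_add, add_comm] using this
  have hzb : x + ε • (x - y) ∈ Metric.ball x δ := by
    rw [Metric.mem_ball, dist_eq_norm]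
    have : ‖x + ε • (x - y) - x‖ = ε * ‖x - y‖ := by
      rw [add_sub_cancel_left, norm_smul, Real.norm_eq_abs, abs_of_pos hεpos]
    rw [this, hε]
    rw [div_mul_eq_mul_div, div_lt_iff₀ (by positivity)]
    nlinarith [norm_nonneg (x - y)]
  have : (⟨x + ε • (x - y), hz⟩ : affineSpan ℝ F) ∈ Subtype.val ⁻¹' t := hball hzb
  exact hts this

/-- The relative-interior point lies in the open segment between `y` and the extension. -/
lemma mem_openSegment_extend {N : ℕ} {x y : Pt N} {ε : ℝ} (hε : 0 < ε) :
    x ∈ openSegment ℝ y (x + ε • (x - y)) := by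
  have h1ε : (0:ℝ) < 1 + ε := by linarith
  refine ⟨(1 + ε)⁻¹ * ε, (1 + ε)⁻¹, by positivity, by positivity, ?_, ?_⟩
  · field_simp
    ring
  · have key : ε • y + (x + ε • (x - y)) = (1 + ε) • x := by module
    rw [mul_smul, ← smul_add, key, inv_smul_smul₀ (ne_of_gt h1ε)]

/-- If `A` is extreme in `Q` and contains a relative interior point of `F ⊆ Q`, then `F ⊆ A`. -/
lemma face_subset_of_relint_mem {N : ℕ} {Q A F : Set (Pt N)}
    (hA : IsExtreme ℝ Q A) (hFQ : F ⊆ Q) {x : Pt N}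
    (hx : x ∈ intrinsicInterior ℝ F) (hxA : x ∈ A) : F ⊆ A := by
  intro y hy
  obtain ⟨ε, hε, hz⟩ := extend_beyond hx (subset_affineSpan ℝ F hy)
  exact (hA.2 (hFQ hy) (hFQ hz) hxA (mem_openSegment_extend hε))

/-- If `F` is extreme in `Q`, `x ∈ relint F`, and `A ⊆ Q` lies in the affine span of `F`,
then `A ⊆ F`. -/
lemma subset_face_of_span_le {N : ℕ} {Q A F : Set (Pt N)}
    (hF : IsExtreme ℝ Q F) (hAQ : A ⊆ Q) {x : Pt N}
    (hx : x ∈ intrinsicInterior ℝ F)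
    (hspan : ∀ a ∈ A, a ∈ affineSpan ℝ F) : A ⊆ F := by
  intro a ha
  obtain ⟨ε, hε, hz⟩ := extend_beyond hx (hspan a ha)
  exact (hF.2 (hAQ ha) (hF.1 hz) (intrinsicInterior_subset hx)
    (mem_openSegment_extend hε))

lemma faceDim_of_nonempty {N : ℕ} {s : Set (Pt N)} (h : s.Nonempty) :
    faceDim s = (Module.finrank ℝ (affineSpan ℝ s).direction : ℤ) := by
  rw [faceDim, if_neg h.ne_empty]

/-- An exposed face of `Q` of dimension at most that of an exposed face `F`, meeting the
relative interior of `F`, equals `F`. -/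
lemma face_eq_of_relint_mem {N : ℕ} {Q A F : Set (Pt N)}
    (hQA : IsExposed ℝ Q A) (hQF : IsExposed ℝ Q F) {x : Pt N}
    (hx : x ∈ intrinsicInterior ℝ F) (hxA : x ∈ A)
    (hdim : faceDim A ≤ faceDim F) : A = F := by
  have hxF : x ∈ F := intrinsicInterior_subset hx
  have hFA : F ⊆ A := face_subset_of_relint_mem hQA.isExtreme hQF.subset hx hxA
  have hspanle : affineSpan ℝ F ≤ affineSpan ℝ A := affineSpan_mono ℝ hFA
  have hdirle : (affineSpan ℝ F).direction ≤ (affineSpan ℝ A).direction :=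
    AffineSubspace.direction_le hspanle
  rw [faceDim_of_nonempty ⟨x, hxA⟩, faceDim_of_nonempty ⟨x, hxF⟩, Nat.cast_le] at hdim
  have hdir : (affineSpan ℝ F).direction = (affineSpan ℝ A).direction :=
    Submodule.eq_of_le_of_finrank_le hdirle hdim
  have hspan : affineSpan ℝ F = affineSpan ℝ A :=
    AffineSubspace.ext_of_direction_eq hdir
      ⟨x, subset_affineSpan ℝ F hxF, subset_affineSpan ℝ A hxA⟩
  have hAF : A ⊆ F := subset_face_of_span_le hQF.isExtreme hQA.subset hx
    (fun a ha => hspan ▸ subset_affineSpan ℝ A ha)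
  exact Subset.antisymm hAF hFA


/-- For distinct `k`-faces `F, G` (`k ≥ 1`) of a polytope `Q`
and relative interior points `f ∈ F`, `g ∈ G`, the line through `f` and `g`
meets no face of `Q` of dimension at most `k` other than `F` and `G`; in
particular it misses every other `k`-face and contains no vertex of `Q`. -/
theorem line_avoids_small_faces {N k : ℕ} (Q F G : Set (Pt N)) (f g : Pt N)
    (hQ : IsPolytope Q) (hk : 1 ≤ k)
    (hF : IsKFaceOf k Q F) (hG : IsKFaceOf k Q G) (hFG : F ≠ G)
    (hf : f ∈ intrinsicInterior ℝ F) (hg : g ∈ intrinsicInterior ℝ G) :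
    (∀ A : Set (Pt N), IsFaceOf Q A → faceDim A ≤ (k : ℤ) → A ≠ F → A ≠ G →
      (affineSpan ℝ {f, g} : Set (Pt N)) ∩ A = ∅) ∧
    (∀ R : Set (Pt N), IsKFaceOf k Q R → R ≠ F → R ≠ G →
      (affineSpan ℝ {f, g} : Set (Pt N)) ∩ R = ∅) ∧
    (∀ v : Pt N, IsVertexOf Q v → v ∉ (affineSpan ℝ {f, g} : Set (Pt N))) := by
  obtain ⟨hFface, hFdim⟩ := hF
  obtain ⟨hGface, hGdim⟩ := hG
  have hfF : f ∈ F := intrinsicInterior_subset hf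
  have hgG : g ∈ G := intrinsicInterior_subset hg
  have hfQ : f ∈ Q := hFface.subset hfF
  have hgQ : g ∈ Q := hGface.subset hgG
  have main : ∀ A : Set (Pt N), IsFaceOf Q A → faceDim A ≤ (k : ℤ) → A ≠ F → A ≠ G →
      (affineSpan ℝ {f, g} : Set (Pt N)) ∩ A = ∅ := by
    intro A hAface hAdim hAF hAG
    rw [eq_empty_iff_forall_notMem]
    rintro x ⟨hxL, hxA⟩
    have hxQ : x ∈ Q := hAface.subset hxA
    -- x = f + t • (g - f)
    have hvs : x -ᵥ f ∈ vectorSpan ℝ ({f, g} : Set (Pt N)) := by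
      have := AffineSubspace.vsub_mem_direction hxL (left_mem_affineSpan_pair ℝ f g)
      rwa [direction_affineSpan] at this
    obtain ⟨t, ht⟩ := mem_vectorSpan_pair_rev.mp hvs
    have hx : x = f + t • (g - f) := by
      have : t • (g - f) = x - f := by simpa [vsub_eq_sub] using ht
      rw [this]; abel
    -- helper facts about dimensions
    have hAleF : faceDim A ≤ faceDim F := by rw [hFdim]; exact hAdim
    have hAleG : faceDim A ≤ faceDim G := by rw [hGdim]; exact hAdim
    have hFleG : faceDim F ≤ faceDim G := by rw [hFdim, hGdim]
    have hGleF : faceDim G ≤ faceDim F := by rw [hFdim, hGdim]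
    rcases lt_trichotomy t 0 with ht0 | ht00 | htpos
    · -- f strictly between x and g
      have hfseg : f ∈ openSegment ℝ x g := by
        have h1t : (0:ℝ) < 1 - t := by linarith
        refine ⟨(1 - t)⁻¹, (1 - t)⁻¹ * (-t), inv_pos.mpr h1t,
          mul_pos (inv_pos.mpr h1t) (by linarith), ?_, ?_⟩
        · field_simp
          ring
        · have key : x + (-t) • g = (1 - t) • f := by rw [hx]; module
          rw [mul_smul, ← smul_add, key, inv_smul_smul₀ (ne_of_gt h1t)]
      have := hFface.isExtreme.right_mem_of_mem_openSegment hxQ hgQ hfF hfseg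
      exact hFG (face_eq_of_relint_mem hFface hGface hg this hFleG)
    · -- x = f
      have : x = f := by rw [hx, ht00]; simp
      exact hAF (face_eq_of_relint_mem hAface hFface hf (this ▸ hxA) hAleF)
    · rcases lt_trichotomy t 1 with ht1 | rfl1 | ht1
      · -- x strictly between f and g
        have hxseg : x ∈ openSegment ℝ f g := by
          refine ⟨1 - t, t, by linarith, htpos, by ring, ?_⟩
          rw [hx]; module
        have := hAface.isExtreme.2 hfQ hgQ hxA hxseg
        exact hAF (face_eq_of_relint_mem hAface hFface hf this hAleF)
      · -- x = g
        have hxg : x = g := by rw [hx, rfl1]; module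
        exact hAG (face_eq_of_relint_mem hAface hGface hg (hxg ▸ hxA) hAleG)
      · -- g strictly between f and x
        have hgseg : g ∈ openSegment ℝ f x := by
          have htpos' : (0:ℝ) < t := htpos
          refine ⟨t⁻¹ * (t - 1), t⁻¹,
            mul_pos (inv_pos.mpr htpos') (by linarith), inv_pos.mpr htpos', ?_, ?_⟩
          · field_simp
            ring
          · have key : (t - 1) • f + x = t • g := by rw [hx]; module
            rw [mul_smul, ← smul_add, key, inv_smul_smul₀ (ne_of_gt htpos')]
        have := hGface.isExtreme.2 hfQ hxQ hgG hgseg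
        exact hFG (face_eq_of_relint_mem hGface hFface hf this hGleF).symm
  refine ⟨main, ?_, ?_⟩
  · intro R hR hRF hRG
    exact main R hR.1 (le_of_eq hR.2) hRF hRG
  · intro v hv hvL
    have hdv : faceDim {v} = (0 : ℤ) := by simpa using hv.2
    have hvF : ({v} : Set (Pt N)) ≠ F := by
      intro h
      rw [h, hFdim] at hdv
      omega
    have hvG : ({v} : Set (Pt N)) ≠ G := by
      intro h
      rw [h, hGdim] at hdv
      omega
    have hemp := main {v} hv.1 (by rw [hdv]; exact_mod_cast Int.ofNat_nonneg k) hvF hvG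
    have hmem : v ∈ (affineSpan ℝ {f, g} : Set (Pt N)) ∩ {v} := ⟨hvL, rfl⟩
    rw [hemp] at hmem
    exact hmem
end
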